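/- arXiv:2207.02511 — 8 statements merged into one kernel-verified Lean document; each statement's English description precedes it below -/
import Mathlib

section
/- Let E > 0 and ν ∈ (−1, 1/2). For every smooth compactly supported function φ : ℝ² → ℝ one has ((1−ν²)/E) · ∫_{ℝ²} v̄(x) · Δ(Δφ)(x) dx = φ(0); that is, v̄ is a fundamental solution at the origin of the bilaplacian equation ((1−ν²)/E)·Δ²v = δ₀ in the sense of distributions. -/
open Real MeasureTheory Filter

noncomputable section

/-- First partial derivative `∂_{x₁}`. -/
def pd1 (f : ℝ × ℝ → ℝ) (x : ℝ × ℝ) : ℝ := fderiv ℝ f x (1, 0)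

/-- Second partial derivative `∂_{x₂}`. -/
def pd2 (f : ℝ × ℝ → ℝ) (x : ℝ × ℝ) : ℝ := fderiv ℝ f x (0, 1)

/-- Laplacian of a function on `ℝ²`. -/
def lap (f : ℝ × ℝ → ℝ) : ℝ × ℝ → ℝ := fun x => pd1 (pd1 f) x + pd2 (pd2 f) x

/-- Squared Frobenius norm `|∇²f|²` of the Hessian (sum of squares of the four entries). -/
def hessSq (f : ℝ × ℝ → ℝ) (x : ℝ × ℝ) : ℝ :=
  (pd1 (pd1 f) x)^2 + (pd1 (pd2 f) x)^2 + (pd2 (pd1 f) x)^2 + (pd2 (pd2 f) x)^2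

/-- Squared norm `|∇f|²` of the gradient. -/
def gradSq (f : ℝ × ℝ → ℝ) (x : ℝ × ℝ) : ℝ := (pd1 f x)^2 + (pd2 f x)^2

/-- Open Euclidean disc `B_r(ξ)`. -/
def ball2 (ξ : ℝ × ℝ) (r : ℝ) : Set (ℝ × ℝ) := {x | (x.1-ξ.1)^2 + (x.2-ξ.2)^2 < r^2}

/-- Open annulus `A_{r,R}(0)` centered at the origin. -/
def annulus (r R : ℝ) : Set (ℝ × ℝ) := {x | r^2 < x.1^2 + x.2^2 ∧ x.1^2 + x.2^2 < R^2}

/-- The elastic (Airy) energy `𝒢(f; A) = (1/2)((1+ν)/E) ∫_A (|∇²f|² − ν (Δf)²) dx`. -/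
def energy (E ν : ℝ) (f : ℝ × ℝ → ℝ) (A : Set (ℝ × ℝ)) : ℝ :=
  (1/2) * ((1+ν)/E) * ∫ x in A, (hessSq f x - ν * (lap f x)^2)

/-- The function `v̄(x) = (E/(1−ν²))·(|x|²/(16π))·log |x|²` (with `v̄(0)=0`). -/
def vbar (E ν : ℝ) (x : ℝ × ℝ) : ℝ :=
  if x = 0 then 0
  else (E / (1 - ν^2)) * ((x.1^2 + x.2^2) / (16 * π)) * Real.log (x.1^2 + x.2^2)

/-- The disclination-dipole Airy function `v̄_h(x) = −s(v̄(x−(h/2,0)) − v̄(x+(h/2,0)))`. -/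
def vbarh (E ν s h : ℝ) (x : ℝ × ℝ) : ℝ :=
  -s * (vbar E ν (x - (h/2, 0)) - vbar E ν (x + (h/2, 0)))


namespace VbarAux

open ContinuousLinearMap in
lemma hasDerivAt_slice1 {f : ℝ × ℝ → ℝ} {x : ℝ × ℝ} (hf : DifferentiableAt ℝ f x) :
    HasDerivAt (fun t => f (t, x.2)) (pd1 f x) x.1 := by
  have hι : HasDerivAt (fun t : ℝ => ((t, x.2) : ℝ × ℝ)) ((1 : ℝ), (0 : ℝ)) x.1 :=
    (hasDerivAt_id x.1).prodMk (hasDerivAt_const x.1 x.2)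
  have := (Prod.mk.eta (p := x) ▸ hf.hasFDerivAt).comp_hasDerivAt x.1 hι
  exact this

lemma hasDerivAt_slice2 {f : ℝ × ℝ → ℝ} {x : ℝ × ℝ} (hf : DifferentiableAt ℝ f x) :
    HasDerivAt (fun t => f (x.1, t)) (pd2 f x) x.2 := by
  have hι : HasDerivAt (fun t : ℝ => ((x.1, t) : ℝ × ℝ)) ((0 : ℝ), (1 : ℝ)) x.2 :=
    (hasDerivAt_const x.2 x.1).prodMk (hasDerivAt_id x.2)
  have := (Prod.mk.eta (p := x) ▸ hf.hasFDerivAt).comp_hasDerivAt x.2 hι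
  exact this

lemma pd1_eq {f : ℝ × ℝ → ℝ} {x : ℝ × ℝ} {g : ℝ} (hf : DifferentiableAt ℝ f x)
    (h : HasDerivAt (fun t => f (t, x.2)) g x.1) : pd1 f x = g :=
  (hasDerivAt_slice1 hf).unique h

lemma pd2_eq {f : ℝ × ℝ → ℝ} {x : ℝ × ℝ} {g : ℝ} (hf : DifferentiableAt ℝ f x)
    (h : HasDerivAt (fun t => f (x.1, t)) g x.2) : pd2 f x = g :=
  (hasDerivAt_slice2 hf).unique h

lemma contDiff_pd1 {b : ℝ × ℝ → ℝ} (hb : ContDiff ℝ (⊤ : ℕ∞) b) :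
    ContDiff ℝ (⊤ : ℕ∞) (pd1 b) :=
  (hb.fderiv_right (by exact_mod_cast le_top)).clm_apply contDiff_const

lemma contDiff_pd2 {b : ℝ × ℝ → ℝ} (hb : ContDiff ℝ (⊤ : ℕ∞) b) :
    ContDiff ℝ (⊤ : ℕ∞) (pd2 b) :=
  (hb.fderiv_right (by exact_mod_cast le_top)).clm_apply contDiff_const

lemma hcs_pd1 {b : ℝ × ℝ → ℝ} (hbs : HasCompactSupport b) : HasCompactSupport (pd1 b) :=
  (hbs.fderiv ℝ).comp_left (g := fun L : ℝ × ℝ →L[ℝ] ℝ => L (1, 0)) rfl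

lemma hcs_pd2 {b : ℝ × ℝ → ℝ} (hbs : HasCompactSupport b) : HasCompactSupport (pd2 b) :=
  (hbs.fderiv ℝ).comp_left (g := fun L : ℝ × ℝ →L[ℝ] ℝ => L (0, 1)) rfl

lemma contDiff_lap {b : ℝ × ℝ → ℝ} (hb : ContDiff ℝ (⊤ : ℕ∞) b) :
    ContDiff ℝ (⊤ : ℕ∞) (lap b) :=
  (contDiff_pd1 (contDiff_pd1 hb)).add (contDiff_pd2 (contDiff_pd2 hb))

lemma hcs_lap {b : ℝ × ℝ → ℝ} (hbs : HasCompactSupport b) : HasCompactSupport (lap b) :=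
  (hcs_pd1 (hcs_pd1 hbs)).add (hcs_pd2 (hcs_pd2 hbs))

lemma hcs_slice1 {b : ℝ × ℝ → ℝ} (hbs : HasCompactSupport b) (y : ℝ) :
    HasCompactSupport (fun t => b (t, y)) := by
  apply HasCompactSupport.intro (hbs.image continuous_fst)
  intro t ht
  by_contra h
  exact ht ⟨(t, y), subset_tsupport _ h, rfl⟩

lemma hcs_slice2 {b : ℝ × ℝ → ℝ} (hbs : HasCompactSupport b) (y : ℝ) :
    HasCompactSupport (fun t => b (y, t)) := by
  apply HasCompactSupport.intro (hbs.image continuous_snd)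
  intro t ht
  by_contra h
  exact ht ⟨(y, t), subset_tsupport _ h, rfl⟩

/-- 1D integration by parts twice, with the second factor compactly supported. -/
lemma ibp_line (u u' u'' v v' v'' : ℝ → ℝ)
    (hu : ∀ t, HasDerivAt u (u' t) t) (hu' : ∀ t, HasDerivAt u' (u'' t) t)
    (hv : ∀ t, HasDerivAt v (v' t) t) (hv' : ∀ t, HasDerivAt v' (v'' t) t)
    (hcu : Continuous u) (hcu' : Continuous u') (hcu'' : Continuous u'')
    (hcv : Continuous v) (hcv' : Continuous v') (hcv'' : Continuous v'')
    (hsv : HasCompactSupport v) (hsv' : HasCompactSupport v')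
    (hsv'' : HasCompactSupport v'') :
    ∫ t, u t * v'' t = ∫ t, u'' t * v t := by
  have int1 : Integrable (u * v'') := (hcu.mul hcv'').integrable_of_hasCompactSupport
    hsv''.mul_left
  have int2 : Integrable (u' * v') := (hcu'.mul hcv').integrable_of_hasCompactSupport
    hsv'.mul_left
  have int3 : Integrable (u * v') := (hcu.mul hcv').integrable_of_hasCompactSupport
    hsv'.mul_left
  have int4 : Integrable (u'' * v) := (hcu''.mul hcv).integrable_of_hasCompactSupport
    hsv.mul_left
  have int5 : Integrable (u' * v) := (hcu'.mul hcv).integrable_of_hasCompactSupport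
    hsv.mul_left
  have I1 : ∫ t, u t * v'' t = - ∫ t, u' t * v' t :=
    MeasureTheory.integral_mul_deriv_eq_deriv_mul_of_integrable (fun t _ => hu t) (fun t _ => hv' t) int1 int2 int3
  have I2 : ∫ t, u' t * v' t = - ∫ t, u'' t * v t :=
    MeasureTheory.integral_mul_deriv_eq_deriv_mul_of_integrable (fun t _ => hu' t) (fun t _ => hv t) int2 int4 int5
  rw [I1, I2, neg_neg]

end VbarAux
namespace VbarAux

lemma cont_mul_cs_integrable {f g : ℝ × ℝ → ℝ} (hf : Continuous f) (hg : Continuous g)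
    (hgs : HasCompactSupport g) : MeasureTheory.Integrable (fun x => f x * g x) :=
  (hf.mul hg).integrable_of_hasCompactSupport hgs.mul_left

/-- Integration by parts twice in the first coordinate. -/
lemma ibp_pd1 (a a1 a2 b : ℝ × ℝ → ℝ)
    (ha : Continuous a) (ha1 : Continuous a1) (ha2 : Continuous a2)
    (hda : ∀ x : ℝ × ℝ, HasDerivAt (fun t => a (t, x.2)) (a1 x) x.1)
    (hda1 : ∀ x : ℝ × ℝ, HasDerivAt (fun t => a1 (t, x.2)) (a2 x) x.1)
    (hb : ContDiff ℝ (⊤ : ℕ∞) b) (hbs : HasCompactSupport b) :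
    ∫ x : ℝ × ℝ, a x * pd1 (pd1 b) x = ∫ x : ℝ × ℝ, a2 x * b x := by
  have hb1 : ContDiff ℝ (⊤ : ℕ∞) (pd1 b) := contDiff_pd1 hb
  have hb2 : ContDiff ℝ (⊤ : ℕ∞) (pd1 (pd1 b)) := contDiff_pd1 hb1
  have hbs1 : HasCompactSupport (pd1 b) := hcs_pd1 hbs
  have hbs2 : HasCompactSupport (pd1 (pd1 b)) := hcs_pd1 hbs1
  have intL : MeasureTheory.Integrable (fun x : ℝ × ℝ => a x * pd1 (pd1 b) x) :=
    cont_mul_cs_integrable ha hb2.continuous hbs2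
  have intR : MeasureTheory.Integrable (fun x : ℝ × ℝ => a2 x * b x) :=
    cont_mul_cs_integrable ha2 hb.continuous hbs
  rw [MeasureTheory.Measure.volume_eq_prod] at intL intR ⊢
  rw [MeasureTheory.integral_prod_symm _ intL, MeasureTheory.integral_prod_symm _ intR]
  congr 1
  ext y
  refine ibp_line (fun t => a (t, y)) (fun t => a1 (t, y)) (fun t => a2 (t, y))
      (fun t => b (t, y)) (fun t => pd1 b (t, y)) (fun t => pd1 (pd1 b) (t, y))
      (fun t => hda (t, y)) (fun t => hda1 (t, y))
      (fun t => hasDerivAt_slice1 (x := (t, y)) ((hb.differentiable (by simp)).differentiableAt))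
      (fun t => hasDerivAt_slice1 (x := (t, y)) ((hb1.differentiable (by simp)).differentiableAt))
      (ha.comp (by continuity)) (ha1.comp (by continuity)) (ha2.comp (by continuity))
      (hb.continuous.comp (by continuity)) (hb1.continuous.comp (by continuity))
      (hb2.continuous.comp (by continuity))
      (hcs_slice1 hbs y) (hcs_slice1 hbs1 y) (hcs_slice1 hbs2 y)

/-- Integration by parts twice in the second coordinate. -/
lemma ibp_pd2 (a a1 a2 b : ℝ × ℝ → ℝ)
    (ha : Continuous a) (ha1 : Continuous a1) (ha2 : Continuous a2)
    (hda : ∀ x : ℝ × ℝ, HasDerivAt (fun t => a (x.1, t)) (a1 x) x.2)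
    (hda1 : ∀ x : ℝ × ℝ, HasDerivAt (fun t => a1 (x.1, t)) (a2 x) x.2)
    (hb : ContDiff ℝ (⊤ : ℕ∞) b) (hbs : HasCompactSupport b) :
    ∫ x : ℝ × ℝ, a x * pd2 (pd2 b) x = ∫ x : ℝ × ℝ, a2 x * b x := by
  have hb1 : ContDiff ℝ (⊤ : ℕ∞) (pd2 b) := contDiff_pd2 hb
  have hb2 : ContDiff ℝ (⊤ : ℕ∞) (pd2 (pd2 b)) := contDiff_pd2 hb1
  have hbs1 : HasCompactSupport (pd2 b) := hcs_pd2 hbs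
  have hbs2 : HasCompactSupport (pd2 (pd2 b)) := hcs_pd2 hbs1
  have intL : MeasureTheory.Integrable (fun x : ℝ × ℝ => a x * pd2 (pd2 b) x) :=
    cont_mul_cs_integrable ha hb2.continuous hbs2
  have intR : MeasureTheory.Integrable (fun x : ℝ × ℝ => a2 x * b x) :=
    cont_mul_cs_integrable ha2 hb.continuous hbs
  rw [MeasureTheory.Measure.volume_eq_prod] at intL intR ⊢
  rw [MeasureTheory.integral_prod _ intL, MeasureTheory.integral_prod _ intR]
  congr 1
  ext y
  refine ibp_line (fun t => a (y, t)) (fun t => a1 (y, t)) (fun t => a2 (y, t))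
      (fun t => b (y, t)) (fun t => pd2 b (y, t)) (fun t => pd2 (pd2 b) (y, t))
      (fun t => hda (y, t)) (fun t => hda1 (y, t))
      (fun t => hasDerivAt_slice2 (x := (y, t)) ((hb.differentiable (by simp)).differentiableAt))
      (fun t => hasDerivAt_slice2 (x := (y, t)) ((hb1.differentiable (by simp)).differentiableAt))
      (ha.comp (by continuity)) (ha1.comp (by continuity)) (ha2.comp (by continuity))
      (hb.continuous.comp (by continuity)) (hb1.continuous.comp (by continuity))
      (hb2.continuous.comp (by continuity))
      (hcs_slice2 hbs y) (hcs_slice2 hbs1 y) (hcs_slice2 hbs2 y)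

/-- Integration by parts for the Laplacian. -/
lemma ibp_lap (a a1 a11 a2 a22 b : ℝ × ℝ → ℝ)
    (ha : Continuous a) (ha1 : Continuous a1) (ha11 : Continuous a11)
    (ha2 : Continuous a2) (ha22 : Continuous a22)
    (hda : ∀ x : ℝ × ℝ, HasDerivAt (fun t => a (t, x.2)) (a1 x) x.1)
    (hda1 : ∀ x : ℝ × ℝ, HasDerivAt (fun t => a1 (t, x.2)) (a11 x) x.1)
    (hdb : ∀ x : ℝ × ℝ, HasDerivAt (fun t => a (x.1, t)) (a2 x) x.2)
    (hdb1 : ∀ x : ℝ × ℝ, HasDerivAt (fun t => a2 (x.1, t)) (a22 x) x.2)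
    (hb : ContDiff ℝ (⊤ : ℕ∞) b) (hbs : HasCompactSupport b) :
    ∫ x : ℝ × ℝ, a x * lap b x = ∫ x : ℝ × ℝ, (a11 x + a22 x) * b x := by
  have h1 : ∫ x : ℝ × ℝ, a x * pd1 (pd1 b) x = ∫ x : ℝ × ℝ, a11 x * b x :=
    ibp_pd1 a a1 a11 b ha ha1 ha11 hda hda1 hb hbs
  have h2 : ∫ x : ℝ × ℝ, a x * pd2 (pd2 b) x = ∫ x : ℝ × ℝ, a22 x * b x :=
    ibp_pd2 a a2 a22 b ha ha2 ha22 hdb hdb1 hb hbs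
  have i1 : MeasureTheory.Integrable (fun x : ℝ × ℝ => a x * pd1 (pd1 b) x) :=
    cont_mul_cs_integrable ha (contDiff_pd1 (contDiff_pd1 hb)).continuous
      (hcs_pd1 (hcs_pd1 hbs))
  have i2 : MeasureTheory.Integrable (fun x : ℝ × ℝ => a x * pd2 (pd2 b) x) :=
    cont_mul_cs_integrable ha (contDiff_pd2 (contDiff_pd2 hb)).continuous
      (hcs_pd2 (hcs_pd2 hbs))
  have i3 : MeasureTheory.Integrable (fun x : ℝ × ℝ => a11 x * b x) :=
    cont_mul_cs_integrable ha11 hb.continuous hbs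
  have i4 : MeasureTheory.Integrable (fun x : ℝ × ℝ => a22 x * b x) :=
    cont_mul_cs_integrable ha22 hb.continuous hbs
  calc ∫ x : ℝ × ℝ, a x * lap b x
      = ∫ x : ℝ × ℝ, (a x * pd1 (pd1 b) x + a x * pd2 (pd2 b) x) := by
        simp only [lap, mul_add]
    _ = (∫ x : ℝ × ℝ, a x * pd1 (pd1 b) x) + ∫ x : ℝ × ℝ, a x * pd2 (pd2 b) x :=
        MeasureTheory.integral_add i1 i2
    _ = (∫ x : ℝ × ℝ, a11 x * b x) + ∫ x : ℝ × ℝ, a22 x * b x := by rw [h1, h2]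
    _ = ∫ x : ℝ × ℝ, (a11 x + a22 x) * b x := by
        rw [← MeasureTheory.integral_add i3 i4]; simp [add_mul]

end VbarAux
namespace VbarAux

def Wf (ε : ℝ) (x : ℝ × ℝ) : ℝ := (x.1^2+x.2^2+ε^2) * Real.log (x.1^2+x.2^2+ε^2)
def W1 (ε : ℝ) (x : ℝ × ℝ) : ℝ := 2*x.1*(Real.log (x.1^2+x.2^2+ε^2) + 1)
def W2 (ε : ℝ) (x : ℝ × ℝ) : ℝ := 2*x.2*(Real.log (x.1^2+x.2^2+ε^2) + 1)
def W11 (ε : ℝ) (x : ℝ × ℝ) : ℝ :=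
  2*Real.log (x.1^2+x.2^2+ε^2) + 2 + 4*x.1^2/(x.1^2+x.2^2+ε^2)
def W22 (ε : ℝ) (x : ℝ × ℝ) : ℝ :=
  2*Real.log (x.1^2+x.2^2+ε^2) + 2 + 4*x.2^2/(x.1^2+x.2^2+ε^2)
def Vf (ε : ℝ) (x : ℝ × ℝ) : ℝ :=
  4*Real.log (x.1^2+x.2^2+ε^2) + 8 - 4*ε^2/(x.1^2+x.2^2+ε^2)
def V1 (ε : ℝ) (x : ℝ × ℝ) : ℝ :=
  8*x.1/(x.1^2+x.2^2+ε^2) + 8*ε^2*x.1/(x.1^2+x.2^2+ε^2)^2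
def V2 (ε : ℝ) (x : ℝ × ℝ) : ℝ :=
  8*x.2/(x.1^2+x.2^2+ε^2) + 8*ε^2*x.2/(x.1^2+x.2^2+ε^2)^2
def V11 (ε : ℝ) (x : ℝ × ℝ) : ℝ :=
  8/(x.1^2+x.2^2+ε^2) - 16*x.1^2/(x.1^2+x.2^2+ε^2)^2 + 8*ε^2/(x.1^2+x.2^2+ε^2)^2
    - 32*ε^2*x.1^2/(x.1^2+x.2^2+ε^2)^3
def V22 (ε : ℝ) (x : ℝ × ℝ) : ℝ :=
  8/(x.1^2+x.2^2+ε^2) - 16*x.2^2/(x.1^2+x.2^2+ε^2)^2 + 8*ε^2/(x.1^2+x.2^2+ε^2)^2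
    - 32*ε^2*x.2^2/(x.1^2+x.2^2+ε^2)^3
def Kf (ε : ℝ) (x : ℝ × ℝ) : ℝ := 32*ε^4/(x.1^2+x.2^2+ε^2)^3

variable {ε : ℝ}

lemma hu_pos (hε : ε ≠ 0) (x : ℝ × ℝ) : 0 < x.1^2+x.2^2+ε^2 := by positivity

lemma hasDerivAt_u1 (x : ℝ × ℝ) :
    HasDerivAt (fun t : ℝ => t^2 + x.2^2 + ε^2) (2*x.1) x.1 := by
  simpa using ((hasDerivAt_pow 2 x.1).add_const (x.2^2)).add_const (ε^2)

lemma hasDerivAt_u2 (x : ℝ × ℝ) :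
    HasDerivAt (fun t : ℝ => x.1^2 + t^2 + ε^2) (2*x.2) x.2 := by
  simpa using ((hasDerivAt_pow 2 x.2).const_add (x.1^2)).add_const (ε^2)

lemma hdW1 (hε : ε ≠ 0) (x : ℝ × ℝ) :
    HasDerivAt (fun t => Wf ε (t, x.2)) (W1 ε x) x.1 := by
  have hne : x.1^2+x.2^2+ε^2 ≠ 0 := (hu_pos hε x).ne'
  have h := (hasDerivAt_u1 (ε := ε) x).mul ((hasDerivAt_u1 (ε := ε) x).log hne)
  simp only [Wf, W1]
  refine h.congr_deriv ?_
  field_simp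

lemma hdW2 (hε : ε ≠ 0) (x : ℝ × ℝ) :
    HasDerivAt (fun t => Wf ε (x.1, t)) (W2 ε x) x.2 := by
  have hne : x.1^2+x.2^2+ε^2 ≠ 0 := (hu_pos hε x).ne'
  have h := (hasDerivAt_u2 (ε := ε) x).mul ((hasDerivAt_u2 (ε := ε) x).log hne)
  simp only [Wf, W2]
  refine h.congr_deriv ?_
  field_simp

lemma hdW11 (hε : ε ≠ 0) (x : ℝ × ℝ) :
    HasDerivAt (fun t => W1 ε (t, x.2)) (W11 ε x) x.1 := by
  have hne : x.1^2+x.2^2+ε^2 ≠ 0 := (hu_pos hε x).ne'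
  have h := (((hasDerivAt_id x.1).const_mul (2:ℝ)).mul
    (((hasDerivAt_u1 (ε := ε) x).log hne).add_const 1))
  simp only [W1, W11]
  refine h.congr_deriv ?_
  simp only [id, Pi.pow_apply]
  field_simp
  ring

lemma hdW22 (hε : ε ≠ 0) (x : ℝ × ℝ) :
    HasDerivAt (fun t => W2 ε (x.1, t)) (W22 ε x) x.2 := by
  have hne : x.1^2+x.2^2+ε^2 ≠ 0 := (hu_pos hε x).ne'
  have h := (((hasDerivAt_id x.2).const_mul (2:ℝ)).mul
    (((hasDerivAt_u2 (ε := ε) x).log hne).add_const 1))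
  simp only [W2, W22]
  refine h.congr_deriv ?_
  simp only [id, Pi.pow_apply]
  field_simp
  ring

lemma hdV1 (hε : ε ≠ 0) (x : ℝ × ℝ) :
    HasDerivAt (fun t => Vf ε (t, x.2)) (V1 ε x) x.1 := by
  have hne : x.1^2+x.2^2+ε^2 ≠ 0 := (hu_pos hε x).ne'
  have h := ((((hasDerivAt_u1 (ε := ε) x).log hne).const_mul (4:ℝ)).add_const 8).sub
    ((hasDerivAt_const x.1 (4*ε^2)).div (hasDerivAt_u1 (ε := ε) x) hne)
  simp only [Vf, V1]
  refine h.congr_deriv ?_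
  field_simp
  ring

lemma hdV2 (hε : ε ≠ 0) (x : ℝ × ℝ) :
    HasDerivAt (fun t => Vf ε (x.1, t)) (V2 ε x) x.2 := by
  have hne : x.1^2+x.2^2+ε^2 ≠ 0 := (hu_pos hε x).ne'
  have h := ((((hasDerivAt_u2 (ε := ε) x).log hne).const_mul (4:ℝ)).add_const 8).sub
    ((hasDerivAt_const x.2 (4*ε^2)).div (hasDerivAt_u2 (ε := ε) x) hne)
  simp only [Vf, V2]
  refine h.congr_deriv ?_
  field_simp
  ring

lemma hdV11 (hε : ε ≠ 0) (x : ℝ × ℝ) :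
    HasDerivAt (fun t => V1 ε (t, x.2)) (V11 ε x) x.1 := by
  have hne : x.1^2+x.2^2+ε^2 ≠ 0 := (hu_pos hε x).ne'
  have h := (((hasDerivAt_id x.1).const_mul (8:ℝ)).div (hasDerivAt_u1 (ε := ε) x) hne).add
    (((hasDerivAt_id x.1).const_mul (8*ε^2)).div ((hasDerivAt_u1 (ε := ε) x).pow 2)
      (pow_ne_zero 2 hne))
  simp only [V1, V11]
  refine h.congr_deriv ?_
  simp only [id, Pi.pow_apply]
  field_simp
  ring

lemma hdV22 (hε : ε ≠ 0) (x : ℝ × ℝ) :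
    HasDerivAt (fun t => V2 ε (x.1, t)) (V22 ε x) x.2 := by
  have hne : x.1^2+x.2^2+ε^2 ≠ 0 := (hu_pos hε x).ne'
  have h := (((hasDerivAt_id x.2).const_mul (8:ℝ)).div (hasDerivAt_u2 (ε := ε) x) hne).add
    (((hasDerivAt_id x.2).const_mul (8*ε^2)).div ((hasDerivAt_u2 (ε := ε) x).pow 2)
      (pow_ne_zero 2 hne))
  simp only [V2, V22]
  refine h.congr_deriv ?_
  simp only [id, Pi.pow_apply]
  field_simp
  ring

lemma cont_u : Continuous (fun x : ℝ × ℝ => x.1^2+x.2^2+ε^2) := by fun_prop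

lemma cont_Wf : Continuous (Wf ε) := Continuous.mul_log (cont_u)

lemma cont_W1 (hε : ε ≠ 0) : Continuous (W1 ε) :=
  (continuous_const.mul continuous_fst).mul
    ((cont_u.log fun x => (hu_pos hε x).ne').add continuous_const)

lemma cont_W2 (hε : ε ≠ 0) : Continuous (W2 ε) :=
  (continuous_const.mul continuous_snd).mul
    ((cont_u.log fun x => (hu_pos hε x).ne').add continuous_const)

lemma cont_W11 (hε : ε ≠ 0) : Continuous (W11 ε) := by
  have hne : ∀ x : ℝ × ℝ, x.1^2+x.2^2+ε^2 ≠ 0 := fun x => (hu_pos hε x).ne'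
  exact ((continuous_const.mul (cont_u.log hne)).add continuous_const).add
    ((continuous_const.mul (continuous_fst.pow 2)).div cont_u hne)

lemma cont_W22 (hε : ε ≠ 0) : Continuous (W22 ε) := by
  have hne : ∀ x : ℝ × ℝ, x.1^2+x.2^2+ε^2 ≠ 0 := fun x => (hu_pos hε x).ne'
  exact ((continuous_const.mul (cont_u.log hne)).add continuous_const).add
    ((continuous_const.mul (continuous_snd.pow 2)).div cont_u hne)

lemma cont_Vf (hε : ε ≠ 0) : Continuous (Vf ε) := by
  have hne : ∀ x : ℝ × ℝ, x.1^2+x.2^2+ε^2 ≠ 0 := fun x => (hu_pos hε x).ne'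
  exact ((continuous_const.mul (cont_u.log hne)).add continuous_const).sub
    (continuous_const.div cont_u hne)

lemma cont_V1 (hε : ε ≠ 0) : Continuous (V1 ε) := by
  have hne : ∀ x : ℝ × ℝ, x.1^2+x.2^2+ε^2 ≠ 0 := fun x => (hu_pos hε x).ne'
  exact ((continuous_const.mul continuous_fst).div cont_u hne).add
    ((continuous_const.mul continuous_fst).div (cont_u.pow 2)
      fun x => pow_ne_zero 2 (hne x))

lemma cont_V2 (hε : ε ≠ 0) : Continuous (V2 ε) := by
  have hne : ∀ x : ℝ × ℝ, x.1^2+x.2^2+ε^2 ≠ 0 := fun x => (hu_pos hε x).ne'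
  exact ((continuous_const.mul continuous_snd).div cont_u hne).add
    ((continuous_const.mul continuous_snd).div (cont_u.pow 2)
      fun x => pow_ne_zero 2 (hne x))

lemma cont_V11 (hε : ε ≠ 0) : Continuous (V11 ε) := by
  have hne : ∀ x : ℝ × ℝ, x.1^2+x.2^2+ε^2 ≠ 0 := fun x => (hu_pos hε x).ne'
  refine (((continuous_const.div cont_u hne).sub
    ((continuous_const.mul (continuous_fst.pow 2)).div (cont_u.pow 2)
      fun x => pow_ne_zero 2 (hne x))).add
    (continuous_const.div (cont_u.pow 2) fun x => pow_ne_zero 2 (hne x))).sub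
    ((continuous_const.mul (continuous_fst.pow 2)).div (cont_u.pow 3)
      fun x => pow_ne_zero 3 (hne x))

lemma cont_V22 (hε : ε ≠ 0) : Continuous (V22 ε) := by
  have hne : ∀ x : ℝ × ℝ, x.1^2+x.2^2+ε^2 ≠ 0 := fun x => (hu_pos hε x).ne'
  refine (((continuous_const.div cont_u hne).sub
    ((continuous_const.mul (continuous_snd.pow 2)).div (cont_u.pow 2)
      fun x => pow_ne_zero 2 (hne x))).add
    (continuous_const.div (cont_u.pow 2) fun x => pow_ne_zero 2 (hne x))).sub
    ((continuous_const.mul (continuous_snd.pow 2)).div (cont_u.pow 3)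
      fun x => pow_ne_zero 3 (hne x))

lemma cont_Kf (hε : ε ≠ 0) : Continuous (Kf ε) := by
  have hne : ∀ x : ℝ × ℝ, x.1^2+x.2^2+ε^2 ≠ 0 := fun x => (hu_pos hε x).ne'
  exact continuous_const.div (cont_u.pow 3) fun x => pow_ne_zero 3 (hne x)

lemma W_sum (hε : ε ≠ 0) (x : ℝ × ℝ) : W11 ε x + W22 ε x = Vf ε x := by
  have hne : x.1^2+x.2^2+ε^2 ≠ 0 := (hu_pos hε x).ne'
  simp only [W11, W22, Vf]
  field_simp
  ring

lemma V_sum (hε : ε ≠ 0) (x : ℝ × ℝ) : V11 ε x + V22 ε x = Kf ε x := by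
  have hne : x.1^2+x.2^2+ε^2 ≠ 0 := (hu_pos hε x).ne'
  simp only [V11, V22, Kf]
  field_simp
  ring

end VbarAux
namespace VbarAux

open MeasureTheory

lemma key (ε : ℝ) (hε : ε ≠ 0) (φ : ℝ × ℝ → ℝ) (hφ : ContDiff ℝ (⊤ : ℕ∞) φ)
    (hφc : HasCompactSupport φ) :
    ∫ x : ℝ × ℝ, Wf ε x * lap (lap φ) x = ∫ x : ℝ × ℝ, Kf ε x * φ x := by
  have h1 := ibp_lap (Wf ε) (W1 ε) (W11 ε) (W2 ε) (W22 ε) (lap φ)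
    cont_Wf (cont_W1 hε) (cont_W11 hε) (cont_W2 hε) (cont_W22 hε)
    (hdW1 hε) (hdW11 hε) (hdW2 hε) (hdW22 hε) (contDiff_lap hφ) (hcs_lap hφc)
  have h2 := ibp_lap (Vf ε) (V1 ε) (V11 ε) (V2 ε) (V22 ε) φ
    (cont_Vf hε) (cont_V1 hε) (cont_V11 hε) (cont_V2 hε) (cont_V22 hε)
    (hdV1 hε) (hdV11 hε) (hdV2 hε) (hdV22 hε) hφ hφc
  rw [h1]
  simp only [W_sum hε]
  rw [h2]
  simp only [V_sum hε]

end VbarAux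
namespace VbarAux

open MeasureTheory Real Filter Topology

def Pk (y : ℝ × ℝ) : ℝ := 32/((y.1^2+y.2^2+1)^3)

lemma cont_Pk : Continuous Pk := by
  have hne : ∀ y : ℝ × ℝ, y.1^2+y.2^2+1 ≠ 0 := fun y => by positivity
  exact continuous_const.div ((continuous_fst.pow 2).add (continuous_snd.pow 2) |>.add
    continuous_const |>.pow 3) fun y => pow_ne_zero 3 (hne y)

lemma Pk_nonneg (y : ℝ × ℝ) : 0 ≤ Pk y := by
  have : (0:ℝ) < y.1^2+y.2^2+1 := by positivity
  unfold Pk; positivity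

lemma hasDerivAt_G0 (r : ℝ) :
    HasDerivAt (fun r : ℝ => -8/((r^2+1)^2)) (32*r/((r^2+1)^3)) r := by
  have hne : (r^2+1 : ℝ) ≠ 0 := by positivity
  have h := (hasDerivAt_const r (-8:ℝ)).div (((hasDerivAt_pow 2 r).add_const 1).pow 2)
    (pow_ne_zero 2 hne)
  refine h.congr_deriv ?_
  simp only [id, Pi.pow_apply]
  field_simp
  ring

lemma tendsto_G0 : Tendsto (fun r : ℝ => -8/((r^2+1)^2)) atTop (𝓝 0) := by
  apply Tendsto.div_atTop (tendsto_const_nhds)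
  exact (tendsto_pow_atTop (two_ne_zero)).comp
    (tendsto_atTop_add_const_right atTop 1 (tendsto_pow_atTop two_ne_zero))

lemma radial_integrableOn :
    IntegrableOn (fun r : ℝ => 32*r/((r^2+1)^3)) (Set.Ioi 0) := by
  apply integrableOn_Ioi_deriv_of_nonneg' (fun x _ => hasDerivAt_G0 x)
    (fun x hx => by have h0x : (0:ℝ) < x := hx; positivity) tendsto_G0

lemma radial_integral :
    ∫ r in Set.Ioi (0:ℝ), 32*r/((r^2+1)^3) = 8 := by
  have h := integral_Ioi_of_hasDerivAt_of_nonneg' (fun x (_ : x ∈ Set.Ici (0:ℝ)) =>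
    hasDerivAt_G0 x) (fun x hx => by have h0x : (0:ℝ) < x := hx; positivity) tendsto_G0
  rw [h]
  norm_num

lemma integral_Pk : ∫ y : ℝ × ℝ, Pk y = 16 * π := by
  have h1 : ∀ p : ℝ × ℝ, p.1 • Pk (polarCoord.symm p) = 32*p.1/((p.1^2+1)^3) := by
    intro p
    have hsc : (p.1 * Real.cos p.2)^2 + (p.1 * Real.sin p.2)^2 = p.1^2 := by
      nlinarith [Real.sin_sq_add_cos_sq p.2]
    have hps : polarCoord.symm p = (p.1 * Real.cos p.2, p.1 * Real.sin p.2) := rfl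
    rw [hps]
    simp only [Pk, smul_eq_mul]
    rw [hsc]
    ring
  have htar : polarCoord.target = Set.Ioi (0:ℝ) ×ˢ Set.Ioo (-π) π := rfl
  rw [← integral_comp_polarCoord_symm Pk]
  simp_rw [h1, htar]
  have hint : IntegrableOn (fun p : ℝ × ℝ => 32*p.1/((p.1^2+1)^3))
      (Set.Ioi (0:ℝ) ×ˢ Set.Ioo (-π) π) := by
    have hone : IntegrableOn (fun _ : ℝ => (1:ℝ)) (Set.Ioo (-π) π) := by
      exact integrableOn_const (by rw [Real.volume_Ioo]; exact ENNReal.ofReal_ne_top)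
    have := radial_integrableOn.mul_prod hone
    unfold IntegrableOn
    rw [MeasureTheory.Measure.volume_eq_prod, ← Measure.prod_restrict]
    simpa using this
  rw [MeasureTheory.Measure.volume_eq_prod] at hint ⊢
  rw [setIntegral_prod _ hint]
  have hinner : ∀ r : ℝ, (∫ _ in Set.Ioo (-π) π, 32*r/((r^2+1)^3)) =
      (2*π) * (32*r/((r^2+1)^3)) := by
    intro r
    rw [setIntegral_const]
    rw [measureReal_def, Real.volume_Ioo]
    rw [ENNReal.toReal_ofReal (by linarith [Real.pi_pos])]
    rw [smul_eq_mul]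
    ring_nf
  simp_rw [hinner]
  rw [MeasureTheory.integral_const_mul, radial_integral]
  ring

lemma integrable_Pk : Integrable Pk := by
  have h6 := integrable_rpow_neg_one_add_norm_sq (E := ℝ × ℝ) (μ := volume) (r := 6)
    (by simp [Module.finrank_prod]; norm_num)
  refine ((h6.const_mul 32).mono' cont_Pk.aestronglyMeasurable ?_)
  refine Filter.Eventually.of_forall fun y => ?_
  have hy : ‖y‖^2 ≤ y.1^2 + y.2^2 := by
    rw [Prod.norm_def]
    rcases le_total ‖y.1‖ ‖y.2‖ with h | h
    · rw [max_eq_right h]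
      rw [Real.norm_eq_abs, sq_abs]
      nlinarith [sq_nonneg y.1]
    · rw [max_eq_left h]
      rw [Real.norm_eq_abs, sq_abs]
      nlinarith [sq_nonneg y.2]
  have h0 : (0:ℝ) < 1 + ‖y‖^2 := by positivity
  have hbase : (1 + ‖y‖^2) ≤ y.1^2+y.2^2+1 := by linarith
  have hrpow : ((1:ℝ) + ‖y‖^2) ^ (-(6:ℝ)/2) = ((1+‖y‖^2)^3)⁻¹ := by
    rw [show (-(6:ℝ)/2) = -(3:ℕ) by norm_num]
    rw [Real.rpow_neg h0.le, Real.rpow_natCast]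
  have hPy : Pk y ≤ 32 * ((1+‖y‖^2)^3)⁻¹ := by
    unfold Pk
    rw [div_eq_mul_inv]
    apply mul_le_mul_of_nonneg_left _ (by norm_num)
    apply inv_anti₀ (by positivity)
    exact pow_le_pow_left₀ h0.le hbase 3
  rw [Real.norm_eq_abs, abs_of_nonneg (Pk_nonneg y), hrpow]
  exact hPy

end VbarAux
namespace VbarAux

open MeasureTheory Real Filter Topology

lemma scaling (ε : ℝ) (hε : ε ≠ 0) (φ : ℝ × ℝ → ℝ) :
    ∫ x : ℝ × ℝ, Kf ε x * φ x = ∫ y : ℝ × ℝ, Pk y * φ (ε • y) := by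
  have hfr : Module.finrank ℝ (ℝ × ℝ) = 2 := by
    simp [Module.finrank_prod]
  have h := MeasureTheory.Measure.integral_comp_smul (μ := volume)
    (f := fun x : ℝ × ℝ => Kf ε x * φ x) ε
  rw [hfr] at h
  have habs : |((ε^2)⁻¹ : ℝ)| = (ε^2)⁻¹ := abs_of_pos (by positivity)
  rw [habs, smul_eq_mul] at h
  have hpt : ∀ y : ℝ × ℝ, Kf ε (ε • y) * φ (ε • y) = (ε^2)⁻¹ * (Pk y * φ (ε • y)) := by
    intro y
    have h1 : (ε • y).1 = ε * y.1 := rfl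
    have h2 : (ε • y).2 = ε * y.2 := rfl
    have hA : (0:ℝ) < y.1^2+y.2^2+1 := by positivity
    have : Kf ε (ε • y) = (ε^2)⁻¹ * Pk y := by
      simp only [Kf, Pk, h1, h2]
      rw [show (ε*y.1)^2+(ε*y.2)^2+ε^2 = ε^2*(y.1^2+y.2^2+1) by ring]
      rw [mul_pow]
      field_simp
    rw [this]; ring
  simp_rw [hpt] at h
  rw [MeasureTheory.integral_const_mul] at h
  have hε2 : (ε^2 : ℝ) ≠ 0 := by positivity
  field_simp at h
  linarith [h]

lemma tendstoA (L : ℝ × ℝ → ℝ) (hLc : Continuous L) (hLs : HasCompactSupport L) :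
    Tendsto (fun n : ℕ => ∫ x : ℝ × ℝ, Wf ((n:ℝ)+1)⁻¹ x * L x) atTop
      (𝓝 (∫ x : ℝ × ℝ, (x.1^2+x.2^2) * Real.log (x.1^2+x.2^2) * L x)) := by
  obtain ⟨R, hR⟩ := hLs.isBounded.subset_closedBall 0
  have hR0 : (0:ℝ) ≤ 2*R^2+1 := by positivity
  obtain ⟨C, hC⟩ := (isCompact_Icc (a := (0:ℝ)) (b := 2*R^2+1)).exists_bound_of_continuousOn
    Real.continuous_mul_log.continuousOn
  have hC0 : 0 ≤ C := by
    have := hC 0 ⟨le_refl 0, hR0⟩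
    simpa using this
  apply tendsto_integral_of_dominated_convergence (bound := fun x => C * ‖L x‖)
  · intro n
    exact (cont_Wf.mul hLc).aestronglyMeasurable
  · exact ((hLc.integrable_of_hasCompactSupport hLs).norm.const_mul C)
  · intro n
    refine Eventually.of_forall fun x => ?_
    by_cases hx : L x = 0
    · simp [hx]
    · have hmem : x ∈ tsupport L := subset_tsupport L hx
      have hxR : ‖x‖ ≤ R := by
        have := hR hmem
        simpa [Metric.mem_closedBall] using this
      have hx1 : |x.1| ≤ R := le_trans (norm_fst_le x) hxR
      have hx2 : |x.2| ≤ R := le_trans (norm_snd_le x) hxR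
      have hε1 : (((n:ℝ)+1)⁻¹)^2 ≤ 1 := by
        have h1 : (1:ℝ) ≤ (n:ℝ)+1 := by have := Nat.cast_nonneg (α := ℝ) n; linarith
        have h2 : ((n:ℝ)+1)⁻¹ ≤ 1 := by
          rw [inv_le_one_iff₀]; right; exact h1
        have h3 : (0:ℝ) ≤ ((n:ℝ)+1)⁻¹ := by positivity
        nlinarith
      have hu0 : (0:ℝ) ≤ x.1^2+x.2^2+(((n:ℝ)+1)⁻¹)^2 := by positivity
      have huM : x.1^2+x.2^2+(((n:ℝ)+1)⁻¹)^2 ≤ 2*R^2+1 := by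
        have e1 : x.1^2 ≤ R^2 := by nlinarith [abs_nonneg x.1, sq_abs x.1]
        have e2 : x.2^2 ≤ R^2 := by nlinarith [abs_nonneg x.2, sq_abs x.2]
        linarith
      have hW : ‖Wf ((n:ℝ)+1)⁻¹ x‖ ≤ C := hC _ ⟨hu0, huM⟩
      rw [norm_mul]
      exact mul_le_mul_of_nonneg_right hW (norm_nonneg _)
  · refine Eventually.of_forall fun x => ?_
    apply Tendsto.mul_const
    have he0 : Tendsto (fun n : ℕ => (((n:ℝ)+1)⁻¹)) atTop (𝓝 0) := by
      simpa [one_div] using tendsto_one_div_add_atTop_nhds_zero_nat (𝕜 := ℝ)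
    have he2 : Tendsto (fun n : ℕ => (((n:ℝ)+1)⁻¹)^2) atTop (𝓝 0) := by
      simpa using he0.pow 2
    have hsum : Tendsto (fun n : ℕ => x.1^2+x.2^2+(((n:ℝ)+1)⁻¹)^2) atTop
        (𝓝 (x.1^2+x.2^2)) := by
      simpa using tendsto_const_nhds.add he2
    have := (Real.continuous_mul_log.tendsto (x.1^2+x.2^2)).comp hsum
    simpa [Wf, Function.comp_def] using this

lemma tendstoB (φ : ℝ × ℝ → ℝ) (hφc : Continuous φ) (hφs : HasCompactSupport φ) :
    Tendsto (fun n : ℕ => ∫ y : ℝ × ℝ, Pk y * φ ((((n:ℝ)+1)⁻¹) • y)) atTop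
      (𝓝 (16 * π * φ 0)) := by
  obtain ⟨Cφ, hCφ⟩ := hφs.exists_bound_of_continuous hφc
  have key : Tendsto (fun n : ℕ => ∫ y : ℝ × ℝ, Pk y * φ ((((n:ℝ)+1)⁻¹) • y)) atTop
      (𝓝 (∫ y : ℝ × ℝ, Pk y * φ 0)) := by
    apply tendsto_integral_of_dominated_convergence (bound := fun y => Pk y * Cφ)
    · intro n
      exact (cont_Pk.mul (hφc.comp (continuous_const_smul _))).aestronglyMeasurable
    · exact integrable_Pk.mul_const Cφ
    · intro n
      refine Eventually.of_forall fun y => ?_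
      rw [norm_mul, Real.norm_eq_abs (Pk y), abs_of_nonneg (Pk_nonneg y)]
      exact mul_le_mul_of_nonneg_left (hCφ _) (Pk_nonneg y)
    · refine Eventually.of_forall fun y => ?_
      apply Tendsto.const_mul
      have he0 : Tendsto (fun n : ℕ => (((n:ℝ)+1)⁻¹)) atTop (𝓝 0) := by
        simpa [one_div] using tendsto_one_div_add_atTop_nhds_zero_nat (𝕜 := ℝ)
      have hsm : Tendsto (fun n : ℕ => (((n:ℝ)+1)⁻¹) • y) atTop (𝓝 (0 : ℝ × ℝ)) := by
        simpa [zero_smul] using he0.smul_const y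
      exact (hφc.tendsto 0).comp hsm
  have : ∫ y : ℝ × ℝ, Pk y * φ 0 = 16 * π * φ 0 := by
    rw [MeasureTheory.integral_mul_const, integral_Pk]
  rwa [this] at key

end VbarAux

open Topology VbarAux in
/-- `v̄` is a fundamental solution at the origin of the bilaplacian
equation `((1−ν²)/E)·Δ²v = δ₀` in the sense of distributions. -/
theorem vbar_fundamental_solution (E ν : ℝ) (hE : 0 < E) (hν₁ : -1 < ν) (hν₂ : ν < 1/2)
    (φ : ℝ × ℝ → ℝ) (hφ : ContDiff ℝ (⊤ : ℕ∞) φ) (hφc : HasCompactSupport φ) :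
    ((1 - ν^2)/E) * ∫ x : ℝ × ℝ, vbar E ν x * lap (lap φ) x = φ 0 := by
  set L : ℝ × ℝ → ℝ := lap (lap φ) with hL
  have hLc : Continuous L := (contDiff_lap (contDiff_lap hφ)).continuous
  have hLs : HasCompactSupport L := hcs_lap (hcs_lap hφc)
  -- the three limiting facts
  have hT1 := tendstoA L hLc hLs
  have hεn : ∀ n : ℕ, (((n:ℝ)+1)⁻¹) ≠ 0 := by
    intro n
    have : (0:ℝ) < (n:ℝ)+1 := by positivity
    positivity
  have hT2 : ∀ n : ℕ, ∫ x : ℝ × ℝ, Wf ((n:ℝ)+1)⁻¹ x * L x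
      = ∫ y : ℝ × ℝ, Pk y * φ ((((n:ℝ)+1)⁻¹) • y) := by
    intro n
    rw [key _ (hεn n) φ hφ hφc, scaling _ (hεn n) φ]
  have hT3 := tendstoB φ hφ.continuous hφc
  have hT1' : Tendsto (fun n : ℕ => ∫ y : ℝ × ℝ, Pk y * φ ((((n:ℝ)+1)⁻¹) • y)) atTop
      (𝓝 (∫ x : ℝ × ℝ, (x.1^2+x.2^2) * Real.log (x.1^2+x.2^2) * L x)) := by
    refine hT1.congr fun n => hT2 n
  have hw : ∫ x : ℝ × ℝ, (x.1^2+x.2^2) * Real.log (x.1^2+x.2^2) * L x = 16 * π * φ 0 :=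
    tendsto_nhds_unique hT1' hT3
  -- rewrite vbar in terms of w
  have hν2 : ν^2 < 1 := by nlinarith
  have hνne : (1 - ν^2) ≠ 0 := by nlinarith
  have hEne : E ≠ 0 := ne_of_gt hE
  have hid : ∀ x : ℝ × ℝ, vbar E ν x * L x
      = (E/((1-ν^2)*(16*π))) * ((x.1^2+x.2^2) * Real.log (x.1^2+x.2^2) * L x) := by
    intro x
    by_cases hx : x = 0
    · subst hx
      simp [vbar]
    · rw [vbar, if_neg hx]
      have hπ : (0:ℝ) < π := Real.pi_pos
      have hν16 : ((1:ℝ)-ν^2)*(16*π) ≠ 0 := by positivity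
      field_simp
  simp_rw [hid]
  rw [MeasureTheory.integral_const_mul, hw]
  have hπ : (π : ℝ) ≠ 0 := Real.pi_ne_zero
  field_simp
end
end

section
/- Let s ∈ ℝ. For every x ∈ ℝ² with x ≠ 0, the quotient v̄_h(x)/h converges, as h → 0⁺, to v̄'(x) = (E/(1−ν²))·(s/(8π))·(x₁·log(|x|²) + x₁). -/
open Real MeasureTheory Filter

noncomputable section

/-- For every `x ≠ 0`, `v̄_h(x)/h → v̄'(x)` as `h → 0⁺`, where
`v̄'(x) = (E/(1−ν²))·(s/(8π))·(x₁ log|x|² + x₁)`. -/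
theorem dipole_pointwise_limit (E ν : ℝ) (hE : 0 < E) (hν₁ : -1 < ν) (hν₂ : ν < 1/2)
    (s : ℝ) (x : ℝ × ℝ) (hx : x ≠ 0) :
    Tendsto (fun h : ℝ => vbarh E ν s h x / h) (nhdsWithin 0 (Set.Ioi 0))
      (nhds ((E/(1-ν^2)) * (s/(8*π)) * (x.1 * Real.log (x.1^2 + x.2^2) + x.1))) := by
  have hπ : (π:ℝ) ≠ 0 := Real.pi_ne_zero
  have hr2 : 0 < x.1^2 + x.2^2 := by
    rcases eq_or_ne x.1 0 with h1 | h1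
    · have h2 : x.2 ≠ 0 := fun h2 => hx (Prod.ext h1 h2)
      positivity
    · positivity
  set c := E / (1 - ν^2) with hc
  set F : ℝ → ℝ := fun h =>
    c * (((x.1 + h/2)^2 + x.2^2)/(16*π)) * Real.log ((x.1 + h/2)^2 + x.2^2) with hF
  set d := c/(16*π) * (x.1 * Real.log (x.1^2 + x.2^2) + x.1) with hd
  -- derivative of u(h) = (x₁+h/2)² + x₂²
  have hu : HasDerivAt (fun h : ℝ => (x.1 + h/2)^2 + x.2^2) x.1 0 := by
    have h1 : HasDerivAt (fun h : ℝ => x.1 + h/2) (1/2) 0 :=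
      ((hasDerivAt_id (0:ℝ)).div_const 2).const_add x.1
    have h2 := (h1.pow 2).add_const (x.2^2)
    refine h2.congr_deriv ?_
    push_cast
    ring
  have hu0 : ((x.1 + (0:ℝ)/2)^2 + x.2^2) = x.1^2 + x.2^2 := by norm_num
  have hune : (x.1 + (0:ℝ)/2)^2 + x.2^2 ≠ 0 := by rw [hu0]; exact ne_of_gt hr2
  have hlog : HasDerivAt (fun h : ℝ => Real.log ((x.1 + h/2)^2 + x.2^2))
      ((x.1^2 + x.2^2)⁻¹ * x.1) 0 := by
    have := (Real.hasDerivAt_log hune).comp 0 hu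
    simpa [hu0, Function.comp_def] using this
  have hA : HasDerivAt (fun h : ℝ => c * (((x.1 + h/2)^2 + x.2^2)/(16*π)))
      (c * (x.1/(16*π))) 0 := (hu.div_const (16*π)).const_mul c
  have hFd : HasDerivAt F d 0 := by
    have h3 := hA.mul hlog
    refine h3.congr_deriv ?_
    rw [hd, hu0]
    field_simp
  have hFneg : HasDerivAt (fun h : ℝ => F (-h)) (-d) 0 := by
    have h4 : HasDerivAt (fun h : ℝ => -h) (-1 : ℝ) 0 := (hasDerivAt_id (0:ℝ)).neg
    have hFd' : HasDerivAt F d (-(0:ℝ)) := by simpa using hFd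
    have := hFd'.comp 0 h4
    simpa [Function.comp_def] using this
  set G : ℝ → ℝ := fun h => F h - F (-h) with hG
  have hGd : HasDerivAt G (2*d) 0 := by
    have := hFd.sub hFneg
    refine this.congr_deriv ?_; ring
  have hG0 : G 0 = 0 := by simp [hG]
  have hslope : Tendsto (slope G 0) (nhdsWithin 0 {(0:ℝ)}ᶜ) (nhds (2*d)) :=
    hasDerivAt_iff_tendsto_slope.mp hGd
  have hmono : nhdsWithin (0:ℝ) (Set.Ioi 0) ≤ nhdsWithin 0 {(0:ℝ)}ᶜ :=
    nhdsWithin_mono 0 (fun y hy => ne_of_gt hy)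
  have key : Tendsto (fun h => s * slope G 0 h) (nhdsWithin (0:ℝ) (Set.Ioi 0))
      (nhds (s * (2*d))) := (hslope.mono_left hmono).const_mul s
  -- eventual equality
  have t1 : Tendsto (fun h : ℝ => x + (h/2, 0)) (nhds 0) (nhds x) := by
    have : Continuous (fun h : ℝ => x + (h/2, (0:ℝ))) := by fun_prop
    have := this.tendsto 0
    simpa [Prod.mk_zero_zero] using this
  have t2 : Tendsto (fun h : ℝ => x - (h/2, 0)) (nhds 0) (nhds x) := by
    have : Continuous (fun h : ℝ => x - (h/2, (0:ℝ))) := by fun_prop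
    have := this.tendsto 0
    simpa [Prod.mk_zero_zero] using this
  have hev : ∀ᶠ h in nhdsWithin (0:ℝ) (Set.Ioi 0),
      s * slope G 0 h = vbarh E ν s h x / h := by
    have e1 : ∀ᶠ h in nhds (0:ℝ), x + (h/2, 0) ≠ 0 := t1.eventually_ne hx
    have e2 : ∀ᶠ h in nhds (0:ℝ), x - (h/2, 0) ≠ 0 := t2.eventually_ne hx
    filter_upwards [nhdsWithin_le_nhds (e1.and e2)] with h he
    have hv1 : vbar E ν (x + (h/2, 0)) = F h := by
      rw [vbar, if_neg he.1]
      simp [hF, hc]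
    have hv2 : vbar E ν (x - (h/2, 0)) = F (-h) := by
      rw [vbar, if_neg he.2]
      have : x.1 - h/2 = x.1 + (-h)/2 := by ring
      simp [hF, hc, this]
    rw [vbarh, hv1, hv2, slope_def_field, hG0]
    simp only [hG]
    ring
  have hval : s * (2*d) = (E/(1-ν^2)) * (s/(8*π)) * (x.1 * Real.log (x.1^2 + x.2^2) + x.1) := by
    rw [hd]
    ring
  rw [← hval]
  exact key.congr' hev
end
end

section
/- Let s ∈ ℝ and 0 < r < R. Then the rescaled squared H²-norm of the dipole Airy function on the annulus converges: as h → 0⁺ (with h < r), (1/h²) · ∫_{A_{r,R}(0)} (v̄_h(x)² + |∇v̄_h(x)|² + |∇²v̄_h(x)|²) dx converges to ∫_{A_{r,R}(0)} (v̄'(x)² + |∇v̄'(x)|² + |∇²v̄'(x)|²) dx. In particular the limit is of the form C(r,R)·s² for a finite positive constant C(r,R) depending only on r, R, E, ν. -/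
open Real MeasureTheory Filter

noncomputable section

namespace DipoleAux

def Q (x : ℝ × ℝ) : ℝ := x.1^2 + x.2^2

theorem continuous_Q : Continuous Q := by unfold Q; fun_prop

theorem Q_eq_zero_iff {x : ℝ × ℝ} : Q x = 0 ↔ x = 0 := by
  unfold Q
  constructor
  · intro h
    have h1 : x.1 = 0 := by nlinarith [sq_nonneg x.1, sq_nonneg x.2]
    have h2 : x.2 = 0 := by nlinarith [sq_nonneg x.1, sq_nonneg x.2]
    exact Prod.ext h1 h2
  · rintro rfl; simp

def HasPDAt (f : ℝ × ℝ → ℝ) (x : ℝ × ℝ) (p q : ℝ) : Prop :=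
  ∃ D : ℝ × ℝ →L[ℝ] ℝ, HasFDerivAt f D x ∧ D (1,0) = p ∧ D (0,1) = q

theorem HasPDAt.differentiableAt {f x p q} (h : HasPDAt f x p q) : DifferentiableAt ℝ f x := by
  obtain ⟨D, hD, -, -⟩ := h; exact hD.differentiableAt

theorem HasPDAt.pd1_eq {f x p q} (h : HasPDAt f x p q) : pd1 f x = p := by
  obtain ⟨D, hD, h1, -⟩ := h
  simp only [pd1, hD.fderiv]; exact h1

theorem HasPDAt.pd2_eq {f x p q} (h : HasPDAt f x p q) : pd2 f x = q := by
  obtain ⟨D, hD, -, h2⟩ := h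
  simp only [pd2, hD.fderiv]; exact h2

theorem HasPDAt.norm_fderiv_le {f x p q} (h : HasPDAt f x p q) :
    ‖fderiv ℝ f x‖ ≤ |p| + |q| := by
  obtain ⟨D, hD, h1, h2⟩ := h
  rw [hD.fderiv]
  refine ContinuousLinearMap.opNorm_le_bound _ (by positivity) fun v => ?_
  have hv : v = v.1 • ((1:ℝ),(0:ℝ)) + v.2 • ((0:ℝ),(1:ℝ)) := by ext <;> simp
  have hDv : D v = v.1 * p + v.2 * q := by
    conv_lhs => rw [hv]
    rw [map_add, _root_.map_smul, _root_.map_smul, h1, h2]; simp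
  rw [hDv]
  have hv1 : ‖v.1‖ ≤ ‖v‖ := norm_fst_le v
  have hv2 : ‖v.2‖ ≤ ‖v‖ := norm_snd_le v
  simp only [Real.norm_eq_abs] at *
  calc |v.1 * p + v.2 * q| ≤ |v.1 * p| + |v.2 * q| := abs_add_le _ _
    _ = |v.1| * |p| + |v.2| * |q| := by rw [abs_mul, abs_mul]
    _ ≤ ‖v‖ * |p| + ‖v‖ * |q| := by gcongr
    _ = (|p| + |q|) * ‖v‖ := by ring

theorem hasPDAt_fst (x : ℝ × ℝ) : HasPDAt (fun y => y.1) x 1 0 :=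
  ⟨ContinuousLinearMap.fst ℝ ℝ ℝ, hasFDerivAt_fst, rfl, rfl⟩

theorem hasPDAt_snd (x : ℝ × ℝ) : HasPDAt (fun y => y.2) x 0 1 :=
  ⟨ContinuousLinearMap.snd ℝ ℝ ℝ, hasFDerivAt_snd, rfl, rfl⟩

theorem hasPDAt_const (x : ℝ × ℝ) (c : ℝ) : HasPDAt (fun _ => c) x 0 0 :=
  ⟨0, hasFDerivAt_const c x, rfl, rfl⟩

theorem HasPDAt.add {f g x p₁ q₁ p₂ q₂} (hf : HasPDAt f x p₁ q₁) (hg : HasPDAt g x p₂ q₂) :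
    HasPDAt (fun y => f y + g y) x (p₁ + p₂) (q₁ + q₂) := by
  obtain ⟨D, hD, h1, h2⟩ := hf; obtain ⟨D', hD', h1', h2'⟩ := hg
  exact ⟨D + D', hD.add hD', by simp [h1, h1'], by simp [h2, h2']⟩

theorem HasPDAt.neg {f x p q} (hf : HasPDAt f x p q) : HasPDAt (fun y => -f y) x (-p) (-q) := by
  obtain ⟨D, hD, h1, h2⟩ := hf
  exact ⟨-D, hD.neg, by simp [h1], by simp [h2]⟩

theorem HasPDAt.sub {f g x p₁ q₁ p₂ q₂} (hf : HasPDAt f x p₁ q₁) (hg : HasPDAt g x p₂ q₂) :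
    HasPDAt (fun y => f y - g y) x (p₁ - p₂) (q₁ - q₂) := by
  simpa [sub_eq_add_neg] using hf.add hg.neg

theorem HasPDAt.mul {f g x p₁ q₁ p₂ q₂} (hf : HasPDAt f x p₁ q₁) (hg : HasPDAt g x p₂ q₂) :
    HasPDAt (fun y => f y * g y) x (p₁ * g x + f x * p₂) (q₁ * g x + f x * q₂) := by
  obtain ⟨D, hD, h1, h2⟩ := hf; obtain ⟨D', hD', h1', h2'⟩ := hg
  refine ⟨f x • D' + g x • D, hD.mul hD', ?_, ?_⟩ <;>
    simp [h1, h1', h2, h2', mul_comm] <;> ring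

theorem HasPDAt.const_mul {f x p q} (c : ℝ) (hf : HasPDAt f x p q) :
    HasPDAt (fun y => c * f y) x (c * p) (c * q) := by
  simpa using (hasPDAt_const x c).mul hf

theorem HasPDAt.inv {g x p q} (hg : HasPDAt g x p q) (hx : g x ≠ 0) :
    HasPDAt (fun y => (g y)⁻¹) x (-p / (g x)^2) (-q / (g x)^2) := by
  obtain ⟨D, hD, h1, h2⟩ := hg
  refine ⟨(-((g x)^2)⁻¹) • D, (hasDerivAt_inv hx).comp_hasFDerivAt x hD, ?_, ?_⟩ <;>
    simp [h1, h2] <;> field_simp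

theorem HasPDAt.div {f g x p₁ q₁ p₂ q₂} (hf : HasPDAt f x p₁ q₁) (hg : HasPDAt g x p₂ q₂)
    (hx : g x ≠ 0) :
    HasPDAt (fun y => f y / g y) x ((p₁ * g x - f x * p₂) / (g x)^2)
      ((q₁ * g x - f x * q₂) / (g x)^2) := by
  have := hf.mul (hg.inv hx)
  simp only [div_eq_mul_inv]
  convert this using 1 <;> field_simp <;> ring

theorem HasPDAt.log {f x p q} (hf : HasPDAt f x p q) (hx : f x ≠ 0) :
    HasPDAt (fun y => Real.log (f y)) x (p / f x) (q / f x) := by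
  obtain ⟨D, hD, h1, h2⟩ := hf
  refine ⟨(f x)⁻¹ • D, (Real.hasDerivAt_log hx).comp_hasFDerivAt x hD, ?_, ?_⟩ <;>
    simp [h1, h2] <;> field_simp

theorem HasPDAt.comp_sub_const {f x a p q} (hf : HasPDAt f (x - a) p q) :
    HasPDAt (fun y => f (y - a)) x p q := by
  obtain ⟨D, hD, h1, h2⟩ := hf
  exact ⟨D, hD.comp x ((hasFDerivAt_id x).sub_const a), h1, h2⟩

theorem HasPDAt.comp_add_const {f x a p q} (hf : HasPDAt f (x + a) p q) :
    HasPDAt (fun y => f (y + a)) x p q := by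
  obtain ⟨D, hD, h1, h2⟩ := hf
  exact ⟨D, hD.comp x ((hasFDerivAt_id x).add_const a), h1, h2⟩

theorem HasPDAt.congr_pq {f x p q p' q'} (h : HasPDAt f x p q) (hp : p' = p) (hq : q' = q) :
    HasPDAt f x p' q' := by rw [hp, hq]; exact h

theorem hasPDAt_Q (x : ℝ × ℝ) : HasPDAt Q x (2*x.1) (2*x.2) := by
  have h : HasPDAt (fun y : ℝ × ℝ => y.1 * y.1 + y.2 * y.2) x (2*x.1) (2*x.2) := by
    have := ((hasPDAt_fst x).mul (hasPDAt_fst x)).add ((hasPDAt_snd x).mul (hasPDAt_snd x))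
    exact this.congr_pq (by ring) (by ring)
  have e : Q = fun y : ℝ × ℝ => y.1 * y.1 + y.2 * y.2 := by funext y; simp [Q]; ring
  rw [e]; exact h

def W (c : ℝ) (x : ℝ × ℝ) : ℝ := c * Q x * Real.log (Q x)
def G1 (c : ℝ) (x : ℝ × ℝ) : ℝ := c * (2*x.1*Real.log (Q x) + 2*x.1)
def G2 (c : ℝ) (x : ℝ × ℝ) : ℝ := c * (2*x.2*Real.log (Q x) + 2*x.2)
def G11 (c : ℝ) (x : ℝ × ℝ) : ℝ := c * (2*Real.log (Q x) + 2 + 4*(x.1*x.1)/Q x)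
def G12 (c : ℝ) (x : ℝ × ℝ) : ℝ := c * (4*(x.1*x.2)/Q x)
def G22 (c : ℝ) (x : ℝ × ℝ) : ℝ := c * (2*Real.log (Q x) + 2 + 4*(x.2*x.2)/Q x)
def T111 (c : ℝ) (x : ℝ × ℝ) : ℝ := c * (12*x.1/Q x - 8*(x.1*x.1*x.1)/(Q x*Q x))
def T112 (c : ℝ) (x : ℝ × ℝ) : ℝ := c * (4*x.2/Q x - 8*(x.1*x.1*x.2)/(Q x*Q x))
def T122 (c : ℝ) (x : ℝ × ℝ) : ℝ := c * (4*x.1/Q x - 8*(x.1*x.2*x.2)/(Q x*Q x))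
def T222 (c : ℝ) (x : ℝ × ℝ) : ℝ := c * (12*x.2/Q x - 8*(x.2*x.2*x.2)/(Q x*Q x))

theorem hasPD_W (c : ℝ) {x} (hx : Q x ≠ 0) : HasPDAt (W c) x (G1 c x) (G2 c x) := by
  have h := (((hasPDAt_Q x).const_mul c).mul ((hasPDAt_Q x).log hx))
  exact h.congr_pq (by have hxq : x.1^2+x.2^2 ≠ 0 := hx; unfold G1 Q; field_simp; try ring; try exact Or.inl trivial) (by have hxq : x.1^2+x.2^2 ≠ 0 := hx; unfold G2 Q; field_simp; try ring; try exact Or.inl trivial)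

theorem hasPD_G1 (c : ℝ) {x} (hx : Q x ≠ 0) : HasPDAt (G1 c) x (G11 c x) (G12 c x) := by
  have hlog := (hasPDAt_Q x).log hx
  have h := ((((hasPDAt_fst x).const_mul 2).mul hlog).add
    ((hasPDAt_fst x).const_mul 2)).const_mul c
  exact h.congr_pq (by have hxq : x.1^2+x.2^2 ≠ 0 := hx; unfold G11 Q; field_simp; try ring; try exact Or.inl trivial) (by have hxq : x.1^2+x.2^2 ≠ 0 := hx; unfold G12 Q; field_simp; try ring; try exact Or.inl trivial)

theorem hasPD_G2 (c : ℝ) {x} (hx : Q x ≠ 0) : HasPDAt (G2 c) x (G12 c x) (G22 c x) := by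
  have hlog := (hasPDAt_Q x).log hx
  have h := ((((hasPDAt_snd x).const_mul 2).mul hlog).add
    ((hasPDAt_snd x).const_mul 2)).const_mul c
  exact h.congr_pq (by have hxq : x.1^2+x.2^2 ≠ 0 := hx; unfold G12 Q; field_simp; try ring; try exact Or.inl trivial) (by have hxq : x.1^2+x.2^2 ≠ 0 := hx; unfold G22 Q; field_simp; try ring; try exact Or.inl trivial)

theorem hasPD_G11 (c : ℝ) {x} (hx : Q x ≠ 0) : HasPDAt (G11 c) x (T111 c x) (T112 c x) := by
  have hlog := (hasPDAt_Q x).log hx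
  have h := (((hlog.const_mul 2).add (hasPDAt_const x 2)).add
    ((((hasPDAt_fst x).mul (hasPDAt_fst x)).const_mul 4).div (hasPDAt_Q x) hx)).const_mul c
  exact h.congr_pq (by have hxq : x.1^2+x.2^2 ≠ 0 := hx; unfold T111 Q; field_simp; try ring; try exact Or.inl trivial) (by have hxq : x.1^2+x.2^2 ≠ 0 := hx; unfold T112 Q; field_simp; try ring; try exact Or.inl trivial)

theorem hasPD_G22 (c : ℝ) {x} (hx : Q x ≠ 0) : HasPDAt (G22 c) x (T122 c x) (T222 c x) := by
  have hlog := (hasPDAt_Q x).log hx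
  have h := (((hlog.const_mul 2).add (hasPDAt_const x 2)).add
    ((((hasPDAt_snd x).mul (hasPDAt_snd x)).const_mul 4).div (hasPDAt_Q x) hx)).const_mul c
  exact h.congr_pq (by have hxq : x.1^2+x.2^2 ≠ 0 := hx; unfold T122 Q; field_simp; try ring; try exact Or.inl trivial) (by have hxq : x.1^2+x.2^2 ≠ 0 := hx; unfold T222 Q; field_simp; try ring; try exact Or.inl trivial)

theorem hasPD_G12 (c : ℝ) {x} (hx : Q x ≠ 0) : HasPDAt (G12 c) x (T112 c x) (T122 c x) := by
  have h := ((((hasPDAt_fst x).mul (hasPDAt_snd x)).const_mul 4).div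
    (hasPDAt_Q x) hx).const_mul c
  exact h.congr_pq (by have hxq : x.1^2+x.2^2 ≠ 0 := hx; unfold T112 Q; field_simp; try ring; try exact Or.inl trivial) (by have hxq : x.1^2+x.2^2 ≠ 0 := hx; unfold T122 Q; field_simp; try ring; try exact Or.inl trivial)

theorem tendsto_diffquot {φ : ℝ × ℝ → ℝ} {x : ℝ × ℝ} {p q : ℝ}
    (hφ : HasPDAt φ x p q) (r : ℝ) :
    Tendsto (fun h : ℝ => (φ (x - (h/2, 0)) - φ (x + (h/2, 0))) / h)
      (nhdsWithin 0 (Set.Ioo 0 r)) (nhds (-p)) := by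
  obtain ⟨D, hD, h1, -⟩ := hφ
  set ψ : ℝ → ℝ := fun t => φ (x + t • ((1:ℝ), (0:ℝ))) with hψdef
  have hψ : HasDerivAt ψ p 0 := by
    have hin : HasDerivAt (fun t : ℝ => x + t • ((1:ℝ), (0:ℝ))) ((1:ℝ), (0:ℝ)) 0 := by
      simpa using ((hasDerivAt_id (0:ℝ)).smul_const ((1:ℝ), (0:ℝ))).const_add x
    have h0 : x + (0:ℝ) • ((1:ℝ), (0:ℝ)) = x := by simp
    have hcomp := HasFDerivAt.comp_hasDerivAt (x := (0:ℝ)) (by rw [h0]; exact hD) hin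
    simpa [hψdef, h1, Function.comp_def] using hcomp
  have hslope : Tendsto (slope ψ 0) (nhdsWithin 0 {(0:ℝ)}ᶜ) (nhds p) :=
    hasDerivAt_iff_tendsto_slope.mp hψ
  have m1 : Tendsto (fun h : ℝ => h / 2) (nhdsWithin 0 (Set.Ioo 0 r))
      (nhdsWithin 0 {(0:ℝ)}ᶜ) := by
    rw [tendsto_nhdsWithin_iff]
    have ht : Tendsto (fun h : ℝ => h / 2) (nhdsWithin 0 (Set.Ioo 0 r)) (nhds 0) := by
      simpa using ((continuous_id.div_const 2).tendsto (0:ℝ)).mono_left nhdsWithin_le_nhds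
    refine ⟨ht, eventually_mem_nhdsWithin.mono fun h hh => ?_⟩
    simp only [Set.mem_compl_iff, Set.mem_singleton_iff]
    have := hh.1; positivity
  have m2 : Tendsto (fun h : ℝ => -(h / 2)) (nhdsWithin 0 (Set.Ioo 0 r))
      (nhdsWithin 0 {(0:ℝ)}ᶜ) := by
    rw [tendsto_nhdsWithin_iff]
    have ht : Tendsto (fun h : ℝ => -(h / 2)) (nhdsWithin 0 (Set.Ioo 0 r)) (nhds 0) := by
      simpa using ((((continuous_id.div_const (2:ℝ))).tendsto (0:ℝ)).neg).mono_left nhdsWithin_le_nhds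
    refine ⟨ht, eventually_mem_nhdsWithin.mono fun h hh => ?_⟩
    simp only [Set.mem_compl_iff, Set.mem_singleton_iff, neg_eq_zero]
    have := hh.1; positivity
  have comb := ((hslope.comp m2).const_mul (-(1:ℝ)/2)).add
    ((hslope.comp m1).const_mul (-(1:ℝ)/2))
  have hval : -(1:ℝ)/2 * p + -(1:ℝ)/2 * p = -p := by ring
  rw [hval] at comb
  refine Filter.Tendsto.congr' ?_ comb
  filter_upwards [eventually_mem_nhdsWithin] with h hh
  have hne : h ≠ 0 := ne_of_gt hh.1
  have e1 : x + (-(h/2)) • ((1:ℝ), (0:ℝ)) = x - (h/2, 0) := by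
    apply Prod.ext <;> simp <;> ring
  have e2 : x + (h/2) • ((1:ℝ), (0:ℝ)) = x + (h/2, 0) := by
    apply Prod.ext <;> simp
  simp only [Function.comp_apply, slope_def_field, hψdef]
  rw [e1, e2]
  have h00 : x + (0:ℝ) • ((1:ℝ), (0:ℝ)) = x := by simp
  rw [h00]
  field_simp
  have hh' : h * h⁻¹ = 1 := mul_inv_cancel₀ hne
  linear_combination (φ (x - (h / 2, 0)) - φ (x + (h / 2, 0))) * hh'

theorem pd1_congr {f g : ℝ × ℝ → ℝ} {U : Set (ℝ × ℝ)} (hU : IsOpen U) {x} (hx : x ∈ U)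
    (h : Set.EqOn f g U) : pd1 f x = pd1 g x := by
  simp only [pd1]
  rw [Filter.EventuallyEq.fderiv_eq (Filter.eventuallyEq_of_mem (hU.mem_nhds hx) h)]

theorem pd2_congr {f g : ℝ × ℝ → ℝ} {U : Set (ℝ × ℝ)} (hU : IsOpen U) {x} (hx : x ∈ U)
    (h : Set.EqOn f g U) : pd2 f x = pd2 g x := by
  simp only [pd2]
  rw [Filter.EventuallyEq.fderiv_eq (Filter.eventuallyEq_of_mem (hU.mem_nhds hx) h)]

theorem exists_lip {φ pf qf : ℝ × ℝ → ℝ} {K : Set (ℝ × ℝ)} (hK : IsCompact K)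
    (hpd : ∀ y ∈ K, HasPDAt φ y (pf y) (qf y))
    (hc : ContinuousOn (fun y => |pf y| + |qf y|) K) :
    ∃ M : ℝ, 0 ≤ M ∧ ∀ u v : ℝ × ℝ, segment ℝ u v ⊆ K → ‖φ v - φ u‖ ≤ M * ‖v - u‖ := by
  obtain ⟨C, hC⟩ := hK.exists_bound_of_continuousOn hc
  refine ⟨max C 0, le_max_right _ _, fun u v hseg => ?_⟩
  refine Convex.norm_image_sub_le_of_norm_hasFDerivWithin_le
    (f' := fun y => fderiv ℝ φ y)
    (fun y hy => ((hpd y (hseg hy)).differentiableAt.hasFDerivAt).hasFDerivWithinAt)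
    (fun y hy => ?_) (convex_segment u v) (left_mem_segment ℝ u v) (right_mem_segment ℝ u v)
  refine le_trans ((hpd y (hseg hy)).norm_fderiv_le) (le_trans ?_ (le_max_left C 0))
  have := hC y (hseg hy)
  rwa [Real.norm_eq_abs, abs_of_nonneg (by positivity)] at this

def Kset (r R : ℝ) : Set (ℝ × ℝ) := {y | (r/2)^2 ≤ Q y ∧ Q y ≤ (R+r)^2}

theorem isCompact_Kset {r R : ℝ} (hr : 0 < r) (hrR : r < R) : IsCompact (Kset r R) := by
  apply Metric.isCompact_of_isClosed_isBounded
  · exact (isClosed_le continuous_const continuous_Q).inter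
      (isClosed_le continuous_Q continuous_const)
  · apply Bornology.IsBounded.subset (Metric.isBounded_closedBall (x := (0 : ℝ × ℝ)) (r := R + r))
    intro y hy
    rw [Metric.mem_closedBall, dist_zero_right, Prod.norm_def]
    have hQ : y.1^2 + y.2^2 ≤ (R+r)^2 := hy.2
    have h1 : |y.1| ≤ R + r := by
      rw [abs_le]; constructor <;> nlinarith [sq_nonneg y.2]
    have h2 : |y.2| ≤ R + r := by
      rw [abs_le]; constructor <;> nlinarith [sq_nonneg y.1]
    simp only [Real.norm_eq_abs]
    exact max_le h1 h2

theorem Kset_Q_ne {r R : ℝ} (hr : 0 < r) {y : ℝ × ℝ} (hy : y ∈ Kset r R) : Q y ≠ 0 := by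
  have : (0:ℝ) < (r/2)^2 := by positivity
  exact ne_of_gt (lt_of_lt_of_le this hy.1)

theorem seg_mem_Kset {r R : ℝ} (hr : 0 < r) (hrR : r < R) {x : ℝ × ℝ}
    (hx : x ∈ annulus r R) {h : ℝ} (hh : h ∈ Set.Ioo 0 (r/2)) :
    segment ℝ (x - (h/2, 0)) (x + (h/2, 0)) ⊆ Kset r R := by
  intro y hy
  obtain ⟨α, β, hα, hβ, hαβ, rfl⟩ := hy
  set u : ℝ := (β - α) * (h/2) with hu
  have h1 : (α • (x - (h/2, 0)) + β • (x + (h/2, 0))).1 = x.1 + u := by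
    have hα1 : α = 1 - β := by linarith
    simp [hα1, hu]; ring
  have h2 : (α • (x - (h/2, 0)) + β • (x + (h/2, 0))).2 = x.2 := by
    have hα1 : α = 1 - β := by linarith
    simp [hα1]; ring
  have hQy : Q (α • (x - (h/2, 0)) + β • (x + (h/2, 0))) = (x.1 + u)^2 + x.2^2 := by
    unfold Q; rw [h1, h2]
  have hu2 : u^2 ≤ (r/4)^2 := by
    have h' : (β - α)^2 ≤ 1 := by nlinarith
    have hh2 : (h/2)^2 ≤ (r/4)^2 := by nlinarith [hh.1, hh.2]
    calc u^2 = (β - α)^2 * (h/2)^2 := by rw [hu]; ring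
      _ ≤ 1 * (r/4)^2 := mul_le_mul h' hh2 (by positivity) (by norm_num)
      _ = (r/4)^2 := by ring
  obtain ⟨hxl, hxu⟩ := hx
  constructor
  · show (r/2)^2 ≤ Q _
    rw [hQy]; nlinarith [sq_nonneg (x.1/2 + 2*u), sq_nonneg x.2, sq_nonneg x.1]
  · show Q _ ≤ (R+r)^2
    rw [hQy]
    nlinarith [sq_nonneg (x.1*r - 4*u*R), sq_nonneg (x.1 - u), mul_pos hr (hr.trans hrR),
      sq_nonneg (x.1+u), sq_nonneg x.2]

def Vh (h : ℝ) : Set (ℝ × ℝ) := {y | Q (y - (h/2, 0)) ≠ 0 ∧ Q (y + (h/2, 0)) ≠ 0}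

theorem isOpen_Vh (h : ℝ) : IsOpen (Vh h) := by
  have c1 : Continuous fun y : ℝ × ℝ => Q (y - (h/2, 0)) :=
    continuous_Q.comp (continuous_id.sub continuous_const)
  have c2 : Continuous fun y : ℝ × ℝ => Q (y + (h/2, 0)) :=
    continuous_Q.comp (continuous_id.add continuous_const)
  exact (isOpen_compl_singleton.preimage c1).inter (isOpen_compl_singleton.preimage c2)

def U0 : Set (ℝ × ℝ) := {y | Q y ≠ 0}

theorem isOpen_U0 : IsOpen U0 := isOpen_compl_singleton.preimage continuous_Q

theorem mem_Vh {r R : ℝ} (hr : 0 < r) (hrR : r < R) {x : ℝ × ℝ}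
    (hx : x ∈ annulus r R) {h : ℝ} (hh : h ∈ Set.Ioo 0 (r/2)) : x ∈ Vh h := by
  have hseg := seg_mem_Kset hr hrR hx hh
  exact ⟨Kset_Q_ne hr (hseg (left_mem_segment ℝ _ _)),
    Kset_Q_ne hr (hseg (right_mem_segment ℝ _ _))⟩

theorem annulus_isOpen (r R : ℝ) : IsOpen (annulus r R) := by
  have he : annulus r R = {x : ℝ × ℝ | r^2 < Q x} ∩ {x | Q x < R^2} := rfl
  rw [he]
  exact (isOpen_lt continuous_const continuous_Q).inter (isOpen_lt continuous_Q continuous_const)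

theorem annulus_Q_ne {r R : ℝ} (hr : 0 < r) {x : ℝ × ℝ} (hx : x ∈ annulus r R) : Q x ≠ 0 := by
  have h1 : (0:ℝ) < r^2 := by positivity
  exact ne_of_gt (lt_trans h1 hx.1)

theorem annulus_subset_Kset {r R : ℝ} (hr : 0 < r) (hrR : r < R) :
    annulus r R ⊆ Kset r R := by
  intro x hx
  obtain ⟨h1, h2⟩ := hx
  have h1' : r^2 < x.1^2 + x.2^2 := h1
  have h2' : x.1^2 + x.2^2 < R^2 := h2
  constructor
  · show (r/2)^2 ≤ Q x; unfold Q; nlinarith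
  · show Q x ≤ (R+r)^2; unfold Q; nlinarith

def cst (E ν : ℝ) : ℝ := E / (1 - ν^2) / (16*π)

theorem cst_pos {E ν : ℝ} (hE : 0 < E) (h1ν : 0 < 1 - ν^2) : 0 < cst E ν := by
  unfold cst
  have := Real.pi_pos
  positivity

theorem vbar_eq_W (E ν : ℝ) {z : ℝ × ℝ} (hz : Q z ≠ 0) : vbar E ν z = W (cst E ν) z := by
  have hz0 : z ≠ 0 := fun h => hz (Q_eq_zero_iff.mpr h)
  unfold vbar W cst Q
  rw [if_neg hz0]; ring

theorem vbarh_eq_on (E ν s h : ℝ) : Set.EqOn (vbarh E ν s h)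
    (fun y => -s * (W (cst E ν) (y - (h/2, 0)) - W (cst E ν) (y + (h/2, 0)))) (Vh h) := by
  intro y hy
  unfold vbarh
  rw [vbar_eq_W E ν hy.1, vbar_eq_W E ν hy.2]

theorem pd1_vbarh (E ν s h : ℝ) {y} (hy : y ∈ Vh h) :
    pd1 (vbarh E ν s h) y
      = -s * (G1 (cst E ν) (y - (h/2,0)) - G1 (cst E ν) (y + (h/2,0))) := by
  rw [pd1_congr (isOpen_Vh h) hy (vbarh_eq_on E ν s h)]
  exact ((((hasPD_W _ hy.1).comp_sub_const).sub
    ((hasPD_W _ hy.2).comp_add_const)).const_mul (-s)).pd1_eq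

theorem pd2_vbarh (E ν s h : ℝ) {y} (hy : y ∈ Vh h) :
    pd2 (vbarh E ν s h) y
      = -s * (G2 (cst E ν) (y - (h/2,0)) - G2 (cst E ν) (y + (h/2,0))) := by
  rw [pd2_congr (isOpen_Vh h) hy (vbarh_eq_on E ν s h)]
  exact ((((hasPD_W _ hy.1).comp_sub_const).sub
    ((hasPD_W _ hy.2).comp_add_const)).const_mul (-s)).pd2_eq

theorem pd1_pd1_vbarh (E ν s h : ℝ) {y} (hy : y ∈ Vh h) :
    pd1 (pd1 (vbarh E ν s h)) y
      = -s * (G11 (cst E ν) (y - (h/2,0)) - G11 (cst E ν) (y + (h/2,0))) := by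
  rw [pd1_congr (isOpen_Vh h) hy (fun z hz => pd1_vbarh E ν s h hz)]
  exact ((((hasPD_G1 _ hy.1).comp_sub_const).sub
    ((hasPD_G1 _ hy.2).comp_add_const)).const_mul (-s)).pd1_eq

theorem pd2_pd1_vbarh (E ν s h : ℝ) {y} (hy : y ∈ Vh h) :
    pd2 (pd1 (vbarh E ν s h)) y
      = -s * (G12 (cst E ν) (y - (h/2,0)) - G12 (cst E ν) (y + (h/2,0))) := by
  rw [pd2_congr (isOpen_Vh h) hy (fun z hz => pd1_vbarh E ν s h hz)]
  exact ((((hasPD_G1 _ hy.1).comp_sub_const).sub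
    ((hasPD_G1 _ hy.2).comp_add_const)).const_mul (-s)).pd2_eq

theorem pd1_pd2_vbarh (E ν s h : ℝ) {y} (hy : y ∈ Vh h) :
    pd1 (pd2 (vbarh E ν s h)) y
      = -s * (G12 (cst E ν) (y - (h/2,0)) - G12 (cst E ν) (y + (h/2,0))) := by
  rw [pd1_congr (isOpen_Vh h) hy (fun z hz => pd2_vbarh E ν s h hz)]
  exact ((((hasPD_G2 _ hy.1).comp_sub_const).sub
    ((hasPD_G2 _ hy.2).comp_add_const)).const_mul (-s)).pd1_eq

theorem pd2_pd2_vbarh (E ν s h : ℝ) {y} (hy : y ∈ Vh h) :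
    pd2 (pd2 (vbarh E ν s h)) y
      = -s * (G22 (cst E ν) (y - (h/2,0)) - G22 (cst E ν) (y + (h/2,0))) := by
  rw [pd2_congr (isOpen_Vh h) hy (fun z hz => pd2_vbarh E ν s h hz)]
  exact ((((hasPD_G2 _ hy.1).comp_sub_const).sub
    ((hasPD_G2 _ hy.2).comp_add_const)).const_mul (-s)).pd2_eq

def VB (c s : ℝ) (x : ℝ × ℝ) : ℝ := s * G1 c x

theorem pd1_VB {c s : ℝ} {y} (hy : Q y ≠ 0) : pd1 (VB c s) y = s * G11 c y :=
  ((hasPD_G1 c hy).const_mul s).pd1_eq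

theorem pd2_VB {c s : ℝ} {y} (hy : Q y ≠ 0) : pd2 (VB c s) y = s * G12 c y :=
  ((hasPD_G1 c hy).const_mul s).pd2_eq

theorem pd1_pd1_VB {c s : ℝ} {y} (hy : Q y ≠ 0) : pd1 (pd1 (VB c s)) y = s * T111 c y := by
  rw [pd1_congr isOpen_U0 hy (fun z hz => pd1_VB hz)]
  exact ((hasPD_G11 c hy).const_mul s).pd1_eq

theorem pd2_pd1_VB {c s : ℝ} {y} (hy : Q y ≠ 0) : pd2 (pd1 (VB c s)) y = s * T112 c y := by
  rw [pd2_congr isOpen_U0 hy (fun z hz => pd1_VB hz)]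
  exact ((hasPD_G11 c hy).const_mul s).pd2_eq

theorem pd1_pd2_VB {c s : ℝ} {y} (hy : Q y ≠ 0) : pd1 (pd2 (VB c s)) y = s * T112 c y := by
  rw [pd1_congr isOpen_U0 hy (fun z hz => pd2_VB hz)]
  exact ((hasPD_G12 c hy).const_mul s).pd1_eq

theorem pd2_pd2_VB {c s : ℝ} {y} (hy : Q y ≠ 0) : pd2 (pd2 (VB c s)) y = s * T122 c y := by
  rw [pd2_congr isOpen_U0 hy (fun z hz => pd2_VB hz)]
  exact ((hasPD_G12 c hy).const_mul s).pd2_eq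

def Gfun (c : ℝ) (x : ℝ × ℝ) : ℝ :=
  (G1 c x)^2 + ((G11 c x)^2 + (G12 c x)^2) +
    ((T111 c x)^2 + (T112 c x)^2 + (T112 c x)^2 + (T122 c x)^2)

theorem integrand_eq (c s : ℝ) {x} (hx : Q x ≠ 0) :
    (VB c s x)^2 + gradSq (VB c s) x + hessSq (VB c s) x = s^2 * Gfun c x := by
  simp only [gradSq, hessSq]
  rw [pd1_VB hx, pd2_VB hx, pd1_pd1_VB hx, pd1_pd2_VB hx, pd2_pd1_VB hx, pd2_pd2_VB hx]
  unfold VB Gfun; ring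

theorem contOn_G1 (c : ℝ) {K} (hne : ∀ y ∈ K, Q y ≠ 0) : ContinuousOn (G1 c) K :=
  fun y hy => ((hasPD_G1 c (hne y hy)).differentiableAt.continuousAt).continuousWithinAt

theorem contOn_G2 (c : ℝ) {K} (hne : ∀ y ∈ K, Q y ≠ 0) : ContinuousOn (G2 c) K :=
  fun y hy => ((hasPD_G2 c (hne y hy)).differentiableAt.continuousAt).continuousWithinAt

theorem contOn_G11 (c : ℝ) {K} (hne : ∀ y ∈ K, Q y ≠ 0) : ContinuousOn (G11 c) K :=
  fun y hy => ((hasPD_G11 c (hne y hy)).differentiableAt.continuousAt).continuousWithinAt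

theorem contOn_G12 (c : ℝ) {K} (hne : ∀ y ∈ K, Q y ≠ 0) : ContinuousOn (G12 c) K :=
  fun y hy => ((hasPD_G12 c (hne y hy)).differentiableAt.continuousAt).continuousWithinAt

theorem contOn_G22 (c : ℝ) {K} (hne : ∀ y ∈ K, Q y ≠ 0) : ContinuousOn (G22 c) K :=
  fun y hy => ((hasPD_G22 c (hne y hy)).differentiableAt.continuousAt).continuousWithinAt

theorem contOn_QQ {K : Set (ℝ × ℝ)} (hne : ∀ y ∈ K, Q y ≠ 0) :
    ∀ y ∈ K, Q y * Q y ≠ 0 := fun y hy => mul_ne_zero (hne y hy) (hne y hy)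

theorem contOn_T111 (c : ℝ) {K} (hne : ∀ y ∈ K, Q y ≠ 0) : ContinuousOn (T111 c) K := by
  unfold T111
  exact continuousOn_const.mul
    (((continuousOn_const.mul continuous_fst.continuousOn).div
        continuous_Q.continuousOn hne).sub
      ((continuousOn_const.mul
          (((continuous_fst.mul continuous_fst).mul continuous_fst).continuousOn)).div
        ((continuous_Q.mul continuous_Q).continuousOn) (contOn_QQ hne)))

theorem contOn_T112 (c : ℝ) {K} (hne : ∀ y ∈ K, Q y ≠ 0) : ContinuousOn (T112 c) K := by
  unfold T112
  exact continuousOn_const.mul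
    (((continuousOn_const.mul continuous_snd.continuousOn).div
        continuous_Q.continuousOn hne).sub
      ((continuousOn_const.mul
          (((continuous_fst.mul continuous_fst).mul continuous_snd).continuousOn)).div
        ((continuous_Q.mul continuous_Q).continuousOn) (contOn_QQ hne)))

theorem contOn_T122 (c : ℝ) {K} (hne : ∀ y ∈ K, Q y ≠ 0) : ContinuousOn (T122 c) K := by
  unfold T122
  exact continuousOn_const.mul
    (((continuousOn_const.mul continuous_fst.continuousOn).div
        continuous_Q.continuousOn hne).sub
      ((continuousOn_const.mul
          (((continuous_fst.mul continuous_snd).mul continuous_snd).continuousOn)).div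
        ((continuous_Q.mul continuous_Q).continuousOn) (contOn_QQ hne)))

theorem contOn_T222 (c : ℝ) {K} (hne : ∀ y ∈ K, Q y ≠ 0) : ContinuousOn (T222 c) K := by
  unfold T222
  exact continuousOn_const.mul
    (((continuousOn_const.mul continuous_snd.continuousOn).div
        continuous_Q.continuousOn hne).sub
      ((continuousOn_const.mul
          (((continuous_snd.mul continuous_snd).mul continuous_snd).continuousOn)).div
        ((continuous_Q.mul continuous_Q).continuousOn) (contOn_QQ hne)))

theorem contOn_Gfun (c : ℝ) {K} (hne : ∀ y ∈ K, Q y ≠ 0) : ContinuousOn (Gfun c) K := by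
  unfold Gfun
  exact (((contOn_G1 c hne).pow 2).add
      (((contOn_G11 c hne).pow 2).add ((contOn_G12 c hne).pow 2))).add
    (((((contOn_T111 c hne).pow 2).add ((contOn_T112 c hne).pow 2)).add
        ((contOn_T112 c hne).pow 2)).add ((contOn_T122 c hne).pow 2))

theorem measurable_pd1 (f : ℝ × ℝ → ℝ) : Measurable (pd1 f) := by
  unfold pd1; exact measurable_fderiv_apply_const ℝ (f := f) ((1:ℝ),(0:ℝ))

theorem measurable_pd2 (f : ℝ × ℝ → ℝ) : Measurable (pd2 f) := by
  unfold pd2; exact measurable_fderiv_apply_const ℝ (f := f) ((0:ℝ),(1:ℝ))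

theorem measurable_vbar (E ν : ℝ) : Measurable (vbar E ν) := by
  unfold vbar
  refine Measurable.ite measurableSet_eq measurable_const ?_
  exact ((measurable_const.mul
      (((measurable_fst.pow_const 2).add (measurable_snd.pow_const 2)).div_const _)).mul
    (Real.measurable_log.comp
      ((measurable_fst.pow_const 2).add (measurable_snd.pow_const 2))))

theorem measurable_vbarh (E ν s h : ℝ) : Measurable (vbarh E ν s h) := by
  unfold vbarh
  exact measurable_const.mul
    (((measurable_vbar E ν).comp (measurable_id.sub measurable_const)).sub
      ((measurable_vbar E ν).comp (measurable_id.add measurable_const)))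

theorem measurable_integrand (f : ℝ × ℝ → ℝ) (hf : Measurable f) :
    Measurable (fun x => (f x)^2 + gradSq f x + hessSq f x) := by
  simp only [gradSq, hessSq]
  exact ((hf.pow_const 2).add
      (((measurable_pd1 f).pow_const 2).add ((measurable_pd2 f).pow_const 2))).add
    (((((measurable_pd1 (pd1 f)).pow_const 2).add
          ((measurable_pd1 (pd2 f)).pow_const 2)).add
        ((measurable_pd2 (pd1 f)).pow_const 2)).add ((measurable_pd2 (pd2 f)).pow_const 2))

theorem vbarh_eq (E ν s h : ℝ) {y} (hy : y ∈ Vh h) :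
    vbarh E ν s h y = -s * (W (cst E ν) (y - (h/2, 0)) - W (cst E ν) (y + (h/2, 0))) :=
  vbarh_eq_on E ν s h hy

end DipoleAux

set_option maxHeartbeats 1000000 in
open DipoleAux in
/-- On the annulus `A_{r,R}(0)`, the rescaled squared `H²`-norm of the dipole
Airy function converges, as `h → 0⁺` (with `h < r`), to the squared `H²`-norm of `v̄'`; and the
limit is of the form `C(r,R)·s²` with `C(r,R) > 0` depending only on `r, R, E, ν`. -/
theorem dipole_H2_annulus_limit (E ν : ℝ) (hE : 0 < E) (hν₁ : -1 < ν) (hν₂ : ν < 1/2)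
    (r R : ℝ) (hr : 0 < r) (hrR : r < R) :
    let vbar' : ℝ → ℝ × ℝ → ℝ := fun s x =>
      (E/(1-ν^2)) * (s/(8*π)) * (x.1 * Real.log (x.1^2 + x.2^2) + x.1)
    let I : ℝ → ℝ := fun s =>
      ∫ x in annulus r R, ((vbar' s x)^2 + gradSq (vbar' s) x + hessSq (vbar' s) x)
    (∀ s : ℝ,
      Tendsto (fun h : ℝ => (1/h^2) *
          ∫ x in annulus r R,
            ((vbarh E ν s h x)^2 + gradSq (vbarh E ν s h) x + hessSq (vbarh E ν s h) x))
        (nhdsWithin 0 (Set.Ioo 0 r)) (nhds (I s))) ∧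
    (∃ C : ℝ, 0 < C ∧ ∀ s : ℝ, I s = C * s^2) := by
  intro vbar' I
  have h1ν : (0:ℝ) < 1 - ν^2 := by nlinarith
  have hVB : ∀ s : ℝ, vbar' s = VB (cst E ν) s := by
    intro s; funext x
    show (E/(1-ν^2)) * (s/(8*π)) * (x.1 * Real.log (x.1^2 + x.2^2) + x.1) = _
    unfold VB G1 Q cst
    ring
  have hmeasA : MeasurableSet (annulus r R) := (annulus_isOpen r R).measurableSet
  have hI : ∀ s : ℝ, I s = ∫ x in annulus r R,
      ((VB (cst E ν) s x)^2 + gradSq (VB (cst E ν) s) x + hessSq (VB (cst E ν) s) x) := by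
    intro s
    show (∫ x in annulus r R, ((vbar' s x)^2 + gradSq (vbar' s) x + hessSq (vbar' s) x)) = _
    rw [hVB s]
  have hKc := isCompact_Kset hr hrR
  have hKne : ∀ y ∈ Kset r R, Q y ≠ 0 := fun y hy => Kset_Q_ne hr hy
  have hIs : ∀ s : ℝ, I s = s^2 * ∫ x in annulus r R, Gfun (cst E ν) x := by
    intro s
    have h1 : (∫ x in annulus r R,
        ((VB (cst E ν) s x)^2 + gradSq (VB (cst E ν) s) x + hessSq (VB (cst E ν) s) x))
        = ∫ x in annulus r R, s^2 * Gfun (cst E ν) x :=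
      MeasureTheory.setIntegral_congr_fun hmeasA
        (fun x hx => integrand_eq (cst E ν) s (annulus_Q_ne hr hx))
    rw [hI s, h1, MeasureTheory.integral_const_mul]
  have hev : ∀ᶠ h in nhdsWithin (0:ℝ) (Set.Ioo 0 r), h ∈ Set.Ioo 0 (r/2) := by
    have h1 : ∀ᶠ h in nhdsWithin (0:ℝ) (Set.Ioo 0 r), h ∈ Set.Ioo 0 r :=
      eventually_mem_nhdsWithin
    have h2 : ∀ᶠ h : ℝ in nhdsWithin (0:ℝ) (Set.Ioo 0 r), h < r/2 :=
      (eventually_lt_nhds (by positivity : (0:ℝ) < r/2)).filter_mono nhdsWithin_le_nhds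
    filter_upwards [h1, h2] with h hh hlt using ⟨hh.1, hlt⟩
  constructor
  · -- the convergence statement
    intro s
    have cG1 : ContinuousOn (G1 (cst E ν)) (Kset r R) := contOn_G1 _ hKne
    have cG2 : ContinuousOn (G2 (cst E ν)) (Kset r R) := contOn_G2 _ hKne
    have cG11 : ContinuousOn (G11 (cst E ν)) (Kset r R) := contOn_G11 _ hKne
    have cG12 : ContinuousOn (G12 (cst E ν)) (Kset r R) := contOn_G12 _ hKne
    have cG22 : ContinuousOn (G22 (cst E ν)) (Kset r R) := contOn_G22 _ hKne
    have cT111 : ContinuousOn (T111 (cst E ν)) (Kset r R) := contOn_T111 _ hKne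
    have cT112 : ContinuousOn (T112 (cst E ν)) (Kset r R) := contOn_T112 _ hKne
    have cT122 : ContinuousOn (T122 (cst E ν)) (Kset r R) := contOn_T122 _ hKne
    have cT222 : ContinuousOn (T222 (cst E ν)) (Kset r R) := contOn_T222 _ hKne
    obtain ⟨M1, hM1n, hM1⟩ := exists_lip hKc (fun y hy => hasPD_W _ (hKne y hy))
      ((cG1.abs).add (cG2.abs))
    obtain ⟨M2, hM2n, hM2⟩ := exists_lip hKc (fun y hy => hasPD_G1 _ (hKne y hy))
      ((cG11.abs).add (cG12.abs))
    obtain ⟨M3, hM3n, hM3⟩ := exists_lip hKc (fun y hy => hasPD_G2 _ (hKne y hy))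
      ((cG12.abs).add (cG22.abs))
    obtain ⟨M4, hM4n, hM4⟩ := exists_lip hKc (fun y hy => hasPD_G11 _ (hKne y hy))
      ((cT111.abs).add (cT112.abs))
    obtain ⟨M5, hM5n, hM5⟩ := exists_lip hKc (fun y hy => hasPD_G12 _ (hKne y hy))
      ((cT112.abs).add (cT122.abs))
    obtain ⟨M6, hM6n, hM6⟩ := exists_lip hKc (fun y hy => hasPD_G22 _ (hKne y hy))
      ((cT122.abs).add (cT222.abs))
    rw [hI s]
    have hrw : (fun h : ℝ => (1/h^2) * ∫ x in annulus r R,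
        ((vbarh E ν s h x)^2 + gradSq (vbarh E ν s h) x + hessSq (vbarh E ν s h) x))
        = fun h : ℝ => ∫ x in annulus r R, (1/h^2) *
            ((vbarh E ν s h x)^2 + gradSq (vbarh E ν s h) x + hessSq (vbarh E ν s h) x) := by
      funext h; rw [MeasureTheory.integral_const_mul]
    rw [hrw]
    set B : ℝ := s^2 * (M1^2 + (M2^2 + M3^2) + (M4^2 + M5^2 + M5^2 + M6^2)) with hB
    refine MeasureTheory.tendsto_integral_filter_of_dominated_convergence
      (fun _ => B) ?_ ?_ ?_ ?_
    · filter_upwards with h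
      exact (Measurable.const_mul
        (measurable_integrand _ (measurable_vbarh E ν s h)) _).aestronglyMeasurable
    · -- uniform bound
      filter_upwards [hev] with h hh
      refine MeasureTheory.ae_restrict_of_forall_mem hmeasA fun x hx => ?_
      have hxV : x ∈ Vh h := mem_Vh hr hrR hx hh
      have hseg := seg_mem_Kset hr hrR hx hh
      have hsegswap : segment ℝ (x + (h/2,0)) (x - (h/2,0)) ⊆ Kset r R := by
        rw [segment_symm]; exact hseg
      have hnorm : ‖(x - (h/2,(0:ℝ))) - (x + (h/2,0))‖ = h := by
        have e : (x - (h/2,(0:ℝ))) - (x + (h/2,0)) = (-h, 0) := by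
          apply Prod.ext <;> simp <;> ring
        rw [e, Prod.norm_def]
        simp only [Real.norm_eq_abs, abs_neg, abs_zero, abs_of_pos hh.1]
        exact max_eq_left hh.1.le
      have key : ∀ (φ : ℝ × ℝ → ℝ) (M : ℝ),
          (∀ u v : ℝ × ℝ, segment ℝ u v ⊆ Kset r R → ‖φ v - φ u‖ ≤ M * ‖v - u‖) →
          |φ (x - (h/2,0)) - φ (x + (h/2,0))| ≤ M * h := by
        intro φ M hM
        have := hM (x + (h/2,0)) (x - (h/2,0)) hsegswap
        rwa [hnorm, Real.norm_eq_abs] at this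
      have b0 := key _ _ hM1
      have b1 := key _ _ hM2
      have b2 := key _ _ hM3
      have b3 := key _ _ hM4
      have b4 := key _ _ hM5
      have b5 := key _ _ hM6
      have hne : h ≠ 0 := ne_of_gt hh.1
      have sq_le : ∀ d M : ℝ, |d| ≤ M * h → d^2 ≤ M^2 * h^2 := by
        intro d M hd; nlinarith [abs_nonneg d, sq_abs d]
      have k0 := sq_le _ _ b0
      have k1 := sq_le _ _ b1
      have k2 := sq_le _ _ b2
      have k3 := sq_le _ _ b3
      have k4 := sq_le _ _ b4
      have k5 := sq_le _ _ b5
      simp only [gradSq, hessSq]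
      rw [vbarh_eq E ν s h hxV, pd1_vbarh E ν s h hxV, pd2_vbarh E ν s h hxV,
        pd1_pd1_vbarh E ν s h hxV, pd1_pd2_vbarh E ν s h hxV,
        pd2_pd1_vbarh E ν s h hxV, pd2_pd2_vbarh E ν s h hxV]
      rw [Real.norm_eq_abs, abs_of_nonneg (by positivity)]
      have hfin : ∀ X : ℝ, X ≤ B * h^2 → 1/h^2 * X ≤ B := by
        intro X hX
        calc 1/h^2 * X ≤ 1/h^2 * (B*h^2) := by
              apply mul_le_mul_of_nonneg_left hX (by positivity)
          _ = B := by field_simp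
      apply hfin
      rw [hB]
      nlinarith [mul_le_mul_of_nonneg_left k0 (sq_nonneg s),
        mul_le_mul_of_nonneg_left k1 (sq_nonneg s),
        mul_le_mul_of_nonneg_left k2 (sq_nonneg s),
        mul_le_mul_of_nonneg_left k3 (sq_nonneg s),
        mul_le_mul_of_nonneg_left k4 (sq_nonneg s),
        mul_le_mul_of_nonneg_left k5 (sq_nonneg s)]
    · -- integrability of constant bound
      have hvol : volume (annulus r R) < ⊤ :=
        lt_of_le_of_lt (measure_mono (annulus_subset_Kset hr hrR)) hKc.measure_lt_top
      exact (MeasureTheory.integrableOn_const_iff).mpr (Or.inr hvol)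
    · -- pointwise limit
      refine MeasureTheory.ae_restrict_of_forall_mem hmeasA fun x hx => ?_
      have hQx := annulus_Q_ne hr hx
      have T := ((((tendsto_diffquot (hasPD_W (cst E ν) hQx) r).pow 2).add
          (((tendsto_diffquot (hasPD_G1 (cst E ν) hQx) r).pow 2).add
            ((tendsto_diffquot (hasPD_G2 (cst E ν) hQx) r).pow 2))).add
        ((((tendsto_diffquot (hasPD_G11 (cst E ν) hQx) r).pow 2).add
            ((tendsto_diffquot (hasPD_G12 (cst E ν) hQx) r).pow 2)).add
          (((tendsto_diffquot (hasPD_G12 (cst E ν) hQx) r).pow 2).add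
            ((tendsto_diffquot (hasPD_G22 (cst E ν) hQx) r).pow 2)))).const_mul (s^2)
      rw [integrand_eq (cst E ν) s hQx]
      have hval : s^2 * Gfun (cst E ν) x
          = s^2 * (((-(G1 (cst E ν) x))^2 + ((-(G11 (cst E ν) x))^2 + (-(G12 (cst E ν) x))^2))
            + (((-(T111 (cst E ν) x))^2 + (-(T112 (cst E ν) x))^2)
              + ((-(T112 (cst E ν) x))^2 + (-(T122 (cst E ν) x))^2))) := by
        unfold Gfun; ring
      rw [hval]
      refine Filter.Tendsto.congr' ?_ T
      filter_upwards [hev] with h hh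
      have hxV : x ∈ Vh h := mem_Vh hr hrR hx hh
      have hne : h ≠ 0 := ne_of_gt hh.1
      simp only [gradSq, hessSq]
      rw [vbarh_eq E ν s h hxV, pd1_vbarh E ν s h hxV, pd2_vbarh E ν s h hxV,
        pd1_pd1_vbarh E ν s h hxV, pd1_pd2_vbarh E ν s h hxV,
        pd2_pd1_vbarh E ν s h hxV, pd2_pd2_vbarh E ν s h hxV]
      field_simp
      ring
  · -- the constant
    refine ⟨∫ x in annulus r R, Gfun (cst E ν) x, ?_, fun s => by rw [hIs s]; ring⟩
    have hGcont : ContinuousOn (Gfun (cst E ν)) (Kset r R) := contOn_Gfun _ hKne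
    have hInt : MeasureTheory.IntegrableOn (Gfun (cst E ν)) (annulus r R) :=
      (hGcont.integrableOn_compact hKc).mono_set (annulus_subset_Kset hr hrR)
    have h0 : 0 ≤ᵐ[MeasureTheory.volume.restrict (annulus r R)] Gfun (cst E ν) :=
      Filter.Eventually.of_forall fun x => by unfold Gfun; positivity
    rw [MeasureTheory.setIntegral_pos_iff_support_of_nonneg_ae h0 hInt]
    have hcpos : 0 < cst E ν := cst_pos hE h1ν
    have hΩopen : IsOpen ({x : ℝ × ℝ | 0 < x.1} ∩ annulus r R) :=
      (isOpen_lt continuous_const continuous_fst).inter (annulus_isOpen r R)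
    have hΩne : ({x : ℝ × ℝ | 0 < x.1} ∩ annulus r R).Nonempty := by
      refine ⟨((r+R)/2, 0), ?_, ?_, ?_⟩
      · show (0:ℝ) < (r+R)/2; linarith
      · show r^2 < ((r+R)/2)^2 + (0:ℝ)^2; nlinarith
      · show ((r+R)/2)^2 + (0:ℝ)^2 < R^2; nlinarith
    refine lt_of_lt_of_le (hΩopen.measure_pos MeasureTheory.volume hΩne) (measure_mono ?_)
    rintro x ⟨hx1m, hxa⟩
    have hx1 : 0 < x.1 := hx1m
    refine ⟨?_, hxa⟩
    have hQx : Q x ≠ 0 := annulus_Q_ne hr hxa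
    have hQpos : 0 < Q x := lt_trans (pow_pos hr 2) hxa.1
    have hT : 0 < T111 (cst E ν) x := by
      have e : T111 (cst E ν) x
          = (cst E ν) * (4*x.1*(x.1*x.1 + 3*(x.2*x.2))/(Q x * Q x)) := by
        unfold T111
        have hq : Q x ≠ 0 := hQx
        unfold Q at hq ⊢
        field_simp
        ring
      rw [e]
      apply mul_pos hcpos
      apply div_pos
      · nlinarith [mul_pos hx1 hx1, mul_self_nonneg x.2]
      · exact mul_pos hQpos hQpos
    have hGpos : 0 < Gfun (cst E ν) x := by
      unfold Gfun
      nlinarith [pow_pos hT 2, sq_nonneg (G1 (cst E ν) x), sq_nonneg (G11 (cst E ν) x),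
        sq_nonneg (G12 (cst E ν) x), sq_nonneg (T112 (cst E ν) x),
        sq_nonneg (T122 (cst E ν) x)]
    exact Function.mem_support.mpr (ne_of_gt hGpos)
end
end

section
/- Let R > 0. Then, as h → 0⁺ (with h < R), (1/log(R/h)) · ∫_{A_{h,R}(0)} x₂⁴·x₁² / ( ((x₁−h/2)² + x₂²) · ((x₁+h/2)² + x₂²) )² dx converges to π/8. -/
open Real MeasureTheory Filter

noncomputable section

open Set Topology

lemma annulus_open (a b : ℝ) : IsOpen (annulus a b) := by
  have hc : Continuous fun x : ℝ × ℝ => x.1^2 + x.2^2 := by continuity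
  exact (isOpen_lt continuous_const hc).inter (isOpen_lt hc continuous_const)

lemma annulus_meas (a b : ℝ) : MeasurableSet (annulus a b) := (annulus_open a b).measurableSet

lemma mem_annulus_polar {a b : ℝ} (ha : 0 < a) (hb : 0 < b) {p : ℝ × ℝ} (hp : p ∈ polarCoord.target) :
    ((p.1 * Real.cos p.2, p.1 * Real.sin p.2) ∈ annulus a b) ↔ (a < p.1 ∧ p.1 < b) := by
  have hr : 0 < p.1 := hp.1
  have key : (p.1 * Real.cos p.2)^2 + (p.1 * Real.sin p.2)^2 = p.1^2 := by
    have := sin_sq_add_cos_sq p.2; nlinarith [this]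
  constructor
  · rintro ⟨h1, h2⟩
    rw [key] at h1 h2
    constructor
    · nlinarith
    · nlinarith [sq_nonneg (p.1 - b), sq_nonneg (p.1 + b)]
  · rintro ⟨h1, h2⟩
    refine ⟨?_, ?_⟩ <;> rw [key] <;> nlinarith

lemma polar_annulus {a b : ℝ} (ha : 0 < a) (hb : 0 < b) (f : ℝ × ℝ → ℝ) :
    ∫ x in annulus a b, f x
      = ∫ p in Set.Ioo a b ×ˢ Set.Ioo (-π) π,
          p.1 * f (p.1 * Real.cos p.2, p.1 * Real.sin p.2) := by
  have h1 : ∫ x in annulus a b, f x = ∫ x, (annulus a b).indicator f x :=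
    (integral_indicator (annulus_meas a b)).symm
  rw [h1, ← integral_comp_polarCoord_symm]
  have htar : polarCoord.target = Set.Ioi (0:ℝ) ×ˢ Set.Ioo (-π) π := rfl
  have hsymm : ∀ p : ℝ × ℝ, polarCoord.symm p = (p.1 * Real.cos p.2, p.1 * Real.sin p.2) :=
    fun p => rfl
  have hcongr : ∀ p ∈ polarCoord.target,
      p.1 • (annulus a b).indicator f (polarCoord.symm p)
        = (Set.Ioo a b ×ˢ Set.Ioo (-π) π).indicator
            (fun q : ℝ × ℝ => q.1 * f (q.1 * Real.cos q.2, q.1 * Real.sin q.2)) p := by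
    intro p hp
    rw [hsymm]
    by_cases hmem : (p.1 * Real.cos p.2, p.1 * Real.sin p.2) ∈ annulus a b
    · have hab := (mem_annulus_polar ha hb hp).mp hmem
      rw [Set.indicator_of_mem hmem, Set.indicator_of_mem]
      · rfl
      · rw [htar] at hp
        exact ⟨⟨hab.1, hab.2⟩, hp.2⟩
    · have : p ∉ Set.Ioo a b ×ˢ Set.Ioo (-π) π := by
        intro hpm
        exact hmem ((mem_annulus_polar ha hb hp).mpr ⟨hpm.1.1, hpm.1.2⟩)
      rw [Set.indicator_of_notMem hmem, Set.indicator_of_notMem this, smul_zero]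
  rw [setIntegral_congr_fun (by rw [htar]; exact measurableSet_Ioi.prod measurableSet_Ioo) hcongr]
  rw [setIntegral_indicator (measurableSet_Ioo.prod measurableSet_Ioo)]
  congr 1
  rw [htar]
  rw [Set.prod_inter_prod]
  congr 1
  ext x
  simp only [Set.mem_prod, Set.mem_inter_iff, Set.mem_Ioi, Set.mem_Ioo]
  constructor
  · tauto
  · intro h; exact ⟨⟨ha.trans h.1.1, h.1⟩, h.2, h.2⟩
lemma trig_int : ∫ θ in Set.Ioo (-π) π, Real.sin θ^4 * Real.cos θ^2 = π/8 := by
  rw [← integral_Ioc_eq_integral_Ioo,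
    ← intervalIntegral.integral_of_le (by linarith [pi_pos] : -π ≤ π)]
  have hder : ∀ θ ∈ Set.uIcc (-π) π, HasDerivAt
      (fun t : ℝ => t/16 + Real.cos t * (-(Real.sin t)/16 - (Real.sin t)^3/24 + (Real.sin t)^5/6))
      (Real.sin θ^4 * Real.cos θ^2) θ := by
    intro θ _
    have hs := Real.hasDerivAt_sin θ
    have hc := Real.hasDerivAt_cos θ
    have h1 := ((hasDerivAt_id θ).div_const 16).add
      (hc.mul ((((hs.neg).div_const 16).sub ((hs.pow 3).div_const 24)).add
        ((hs.pow 5).div_const 6)))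
    refine h1.congr_deriv ?_
    have hpy := Real.sin_sq_add_cos_sq θ
    simp only [Pi.add_apply, Pi.sub_apply, Pi.neg_apply, Pi.pow_apply, Nat.reduceSub]
    push_cast
    linear_combination (-(1/16 + Real.sin θ^2/8 + Real.sin θ^4/6)) * hpy
  rw [intervalIntegral.integral_eq_sub_of_hasDerivAt hder
    (Continuous.intervalIntegrable (by continuity) _ _)]
  simp [Real.sin_pi]
  ring

lemma int_inv_Ioo {a b : ℝ} (ha : 0 < a) (hab : a < b) :
    ∫ x in Set.Ioo a b, x⁻¹ = Real.log (b/a) := by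
  rw [← integral_Ioc_eq_integral_Ioo, ← intervalIntegral.integral_of_le hab.le]
  exact integral_inv_of_pos ha (ha.trans hab)

lemma int_invcube_Ioo {a b : ℝ} (ha : 0 < a) (hab : a < b) :
    ∫ x in Set.Ioo a b, (x^3)⁻¹ = ((a^2)⁻¹ - (b^2)⁻¹)/2 := by
  rw [← integral_Ioc_eq_integral_Ioo, ← intervalIntegral.integral_of_le hab.le]
  have hder : ∀ x ∈ Set.uIcc a b, HasDerivAt (fun t : ℝ => -(1/2) * (t^2)⁻¹) ((x^3)⁻¹) x := by
    intro x hx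
    have hx0 : x ≠ 0 := by
      rw [Set.uIcc_of_le hab.le] at hx; exact (lt_of_lt_of_le ha hx.1).ne'
    have h := ((hasDerivAt_pow 2 x).inv (pow_ne_zero 2 hx0)).const_mul (-(1/2:ℝ))
    refine h.congr_deriv ?_
    field_simp
    ring
  rw [intervalIntegral.integral_eq_sub_of_hasDerivAt hder ?_]
  · have hb0 : b ≠ 0 := (ha.trans hab).ne'
    field_simp
    ring
  · apply ContinuousOn.intervalIntegrable
    apply ContinuousOn.inv₀ (by fun_prop)
    intro x hx
    rw [Set.uIcc_of_le hab.le] at hx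
    exact pow_ne_zero 3 (lt_of_lt_of_le ha hx.1).ne'

lemma P1 {a b : ℝ} (ha : 0 < a) (hab : a < b) :
    ∫ x in annulus a b, x.2^4 * x.1^2 / (x.1^2+x.2^2)^4 = Real.log (b/a) * (π/8) := by
  rw [polar_annulus ha (ha.trans hab)]
  have hcongr : ∀ p ∈ Set.Ioo a b ×ˢ Set.Ioo (-π) π,
      p.1 * ((p.1 * Real.sin p.2)^4 * (p.1 * Real.cos p.2)^2
        / ((p.1 * Real.cos p.2)^2 + (p.1 * Real.sin p.2)^2)^4)
      = p.1⁻¹ * (Real.sin p.2^4 * Real.cos p.2^2) := by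
    intro p hp
    have hr : 0 < p.1 := ha.trans hp.1.1
    have key : (p.1 * Real.cos p.2)^2 + (p.1 * Real.sin p.2)^2 = p.1^2 := by
      have := Real.sin_sq_add_cos_sq p.2; nlinarith [this]
    rw [key]
    field_simp
  rw [setIntegral_congr_fun (measurableSet_Ioo.prod measurableSet_Ioo) hcongr]
  rw [Measure.volume_eq_prod, ← Measure.prod_restrict, integral_prod_mul (f := fun r : ℝ => r⁻¹) (g := fun θ : ℝ => Real.sin θ^4 * Real.cos θ^2)]
  rw [int_inv_Ioo ha hab, trig_int]

lemma P2 {a b : ℝ} (ha : 0 < a) (hab : a < b) :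
    ∫ x in annulus a b, ((x.1^2+x.2^2)^2)⁻¹ = π * ((a^2)⁻¹ - (b^2)⁻¹) := by
  rw [polar_annulus ha (ha.trans hab)]
  have hcongr : ∀ p ∈ Set.Ioo a b ×ˢ Set.Ioo (-π) π,
      p.1 * (((p.1 * Real.cos p.2)^2 + (p.1 * Real.sin p.2)^2)^2)⁻¹
      = (p.1^3)⁻¹ * (1:ℝ) := by
    intro p hp
    have hr : 0 < p.1 := ha.trans hp.1.1
    have key : (p.1 * Real.cos p.2)^2 + (p.1 * Real.sin p.2)^2 = p.1^2 := by
      have := Real.sin_sq_add_cos_sq p.2; nlinarith [this]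
    rw [key]
    field_simp
  rw [setIntegral_congr_fun (measurableSet_Ioo.prod measurableSet_Ioo) hcongr]
  rw [Measure.volume_eq_prod, ← Measure.prod_restrict, integral_prod_mul (f := fun r : ℝ => (r^3)⁻¹) (g := fun _ : ℝ => (1:ℝ))]
  rw [int_invcube_Ioo ha hab]
  simp [Real.volume_Ioo]
  rw [max_eq_left (by linarith [pi_pos])]
  ring

lemma alg_core {A D N h : ℝ} (hA0 : 0 < A) (hD4 : A^2/16 ≤ D)
    (hdiff : |A^2 - D| ≤ h^2 * A) (hDub : D ≤ 2*A^2) (hN0 : 0 ≤ N) (hNle : N ≤ A^3) :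
    |N / D^2 - N / A^4| ≤ 768 * h^2 * ((A^2)⁻¹) := by
  have hDpos : 0 < D := lt_of_lt_of_le (by positivity) hD4
  have hh2 : 0 ≤ h^2 := sq_nonneg h
  have key : N / D^2 - N / A^4 = N * ((A^2 - D) * (A^2 + D)) / (D^2 * A^4) := by
    rw [div_sub_div _ _ (by positivity : (D:ℝ)^2 ≠ 0) (by positivity : (A:ℝ)^4 ≠ 0)]
    congr 1
    ring
  rw [key, abs_div, abs_of_pos (by positivity : (0:ℝ) < D^2 * A^4)]
  have hnum : |N * ((A^2 - D) * (A^2 + D))| ≤ A^3 * (h^2*A * (3*A^2)) := by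
    rw [abs_mul, abs_mul]
    apply mul_le_mul (by rwa [abs_of_nonneg hN0]) _ (by positivity) (by positivity)
    apply mul_le_mul hdiff _ (abs_nonneg _) (by positivity)
    rw [abs_of_pos (by positivity)]
    nlinarith
  have hDsq : (A^2/16)^2 ≤ D^2 := by
    nlinarith [mul_le_mul hD4 hD4 (by positivity : (0:ℝ) ≤ A^2/16) hDpos.le]
  have h5 : (A^2/16)^2 * A^4 ≤ D^2 * A^4 :=
    mul_le_mul_of_nonneg_right hDsq (by positivity)
  have hden : A^8/256 ≤ D^2 * A^4 := by nlinarith [h5]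
  calc |N * ((A^2 - D) * (A^2 + D))| / (D^2 * A^4)
      ≤ (A^3 * (h^2*A * (3*A^2))) / (A^8/256) :=
        div_le_div₀ (by positivity) hnum (by positivity) hden
    _ = 768 * h^2 * ((A^2)⁻¹) := by
        rw [div_eq_iff (by positivity : (A:ℝ)^8/256 ≠ 0)]
        have hA2 : (A:ℝ)^2 ≠ 0 := by positivity
        field_simp
        ring

/-- Pointwise error bound on the annulus. -/
lemma pointwise_bound {h : ℝ} (hh : 0 < h) {x : ℝ × ℝ} (hx : h^2 < x.1^2 + x.2^2) :
    |x.2^4 * x.1^2 / (((x.1 - h/2)^2 + x.2^2) * ((x.1 + h/2)^2 + x.2^2))^2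
      - x.2^4 * x.1^2 / (x.1^2+x.2^2)^4|
    ≤ 768 * h^2 * (((x.1^2+x.2^2)^2)⁻¹) := by
  obtain ⟨x1, x2⟩ := x
  simp only
  have hA0 : 0 < x1^2 + x2^2 := lt_trans (by positivity) hx
  have hx1A : x1^2 ≤ x1^2 + x2^2 := by nlinarith [sq_nonneg x2]
  have hd1 : (x1^2+x2^2)/4 ≤ (x1-h/2)^2+x2^2 := by
    nlinarith [sq_nonneg (x1-h), sq_nonneg x2]
  have hd2 : (x1^2+x2^2)/4 ≤ (x1+h/2)^2+x2^2 := by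
    nlinarith [sq_nonneg (x1+h), sq_nonneg x2]
  have hD4 : (x1^2+x2^2)^2/16 ≤ ((x1-h/2)^2+x2^2)*((x1+h/2)^2+x2^2) := by
    nlinarith [mul_le_mul hd1 hd2 (by positivity) (le_trans (by positivity) hd1)]
  have hDub : ((x1-h/2)^2+x2^2)*((x1+h/2)^2+x2^2) ≤ 2*(x1^2+x2^2)^2 := by
    nlinarith [mul_nonneg (sub_nonneg.2 hx.le) hA0.le,
      mul_nonneg (sub_nonneg.2 hx.le) (sq_nonneg h),
      mul_nonneg (sq_nonneg h) (sq_nonneg x1)]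
  have hdiff : |(x1^2+x2^2)^2 - ((x1-h/2)^2+x2^2)*((x1+h/2)^2+x2^2)| ≤ h^2 * (x1^2+x2^2) := by
    rw [abs_le]
    constructor
    · nlinarith [mul_le_mul_of_nonneg_left hx.le (sq_nonneg h),
        mul_nonneg (sq_nonneg h) (sq_nonneg x1)]
    · nlinarith [mul_le_mul_of_nonneg_left hx1A (sq_nonneg h),
        mul_nonneg (sq_nonneg h) (sq_nonneg x2)]
  have hNle : x2^4 * x1^2 ≤ (x1^2+x2^2)^3 := by
    nlinarith [sq_nonneg (x1^3), sq_nonneg (x1^2*x2), sq_nonneg (x1*x2^2), sq_nonneg (x2^3)]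
  have := alg_core (h := h) hA0 hD4 hdiff hDub (by positivity) hNle
  convert this using 3 <;> ring

lemma isCompact_cl (a b : ℝ) :
    IsCompact {x : ℝ × ℝ | a^2 ≤ x.1^2 + x.2^2 ∧ x.1^2 + x.2^2 ≤ b^2} := by
  have hc : Continuous fun x : ℝ × ℝ => x.1^2 + x.2^2 := by continuity
  apply Metric.isCompact_of_isClosed_isBounded
  · exact (isClosed_le continuous_const hc).inter (isClosed_le hc continuous_const)
  · apply Bornology.IsBounded.subset (Metric.isBounded_closedBall (x := ((0,0) : ℝ × ℝ)) (r := |b|))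
    intro x hx
    rw [Metric.mem_closedBall, Prod.dist_eq]
    apply max_le
    · rw [Real.dist_eq, sub_zero]
      nlinarith [sq_abs x.1, abs_nonneg x.1, sq_nonneg x.2, hx.2, sq_abs b, abs_nonneg b]
    · rw [Real.dist_eq, sub_zero]
      nlinarith [sq_abs x.2, abs_nonneg x.2, sq_nonneg x.1, hx.2, sq_abs b, abs_nonneg b]

lemma annulus_subset_cl (a b : ℝ) :
    annulus a b ⊆ {x : ℝ × ℝ | a^2 ≤ x.1^2 + x.2^2 ∧ x.1^2 + x.2^2 ≤ b^2} :=
  fun x hx => ⟨hx.1.le, hx.2.le⟩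

lemma integrable_fh {h R : ℝ} (hh : 0 < h) (hhR : h < R) :
    IntegrableOn (fun x : ℝ × ℝ =>
      x.2^4 * x.1^2 / (((x.1 - h/2)^2 + x.2^2) * ((x.1 + h/2)^2 + x.2^2))^2)
      (annulus h R) := by
  apply IntegrableOn.mono_set _ (annulus_subset_cl h R)
  apply ContinuousOn.integrableOn_compact (isCompact_cl h R)
  apply ContinuousOn.div (by fun_prop) (by fun_prop)
  intro x hx
  have h1 : 0 < (x.1 - h/2)^2 + x.2^2 := by
    nlinarith [hx.1, sq_nonneg (x.1 - h), sq_nonneg x.2, mul_pos hh hh]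
  have h2 : 0 < (x.1 + h/2)^2 + x.2^2 := by
    nlinarith [hx.1, sq_nonneg (x.1 + h), sq_nonneg x.2, mul_pos hh hh]
  positivity

lemma integrable_g {a b : ℝ} (ha : 0 < a) :
    IntegrableOn (fun x : ℝ × ℝ => x.2^4 * x.1^2 / (x.1^2+x.2^2)^4) (annulus a b) := by
  apply IntegrableOn.mono_set _ (annulus_subset_cl a b)
  apply ContinuousOn.integrableOn_compact (isCompact_cl a b)
  apply ContinuousOn.div (by fun_prop) (by fun_prop)
  intro x hx
  have h1 : 0 < x.1^2 + x.2^2 := lt_of_lt_of_le (by positivity) hx.1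
  positivity

lemma integrable_maj {a b c : ℝ} (ha : 0 < a) :
    IntegrableOn (fun x : ℝ × ℝ => c * ((x.1^2+x.2^2)^2)⁻¹) (annulus a b) := by
  apply IntegrableOn.mono_set _ (annulus_subset_cl a b)
  apply ContinuousOn.integrableOn_compact (isCompact_cl a b)
  apply ContinuousOn.mul continuousOn_const
  apply ContinuousOn.inv₀ (by fun_prop)
  intro x hx
  have h1 : 0 < x.1^2 + x.2^2 := lt_of_lt_of_le (by positivity) hx.1
  positivity

lemma error_bound {h R : ℝ} (hh : 0 < h) (hhR : h < R) :
    |(∫ x in annulus h R,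
        x.2^4 * x.1^2 / (((x.1 - h/2)^2 + x.2^2) * ((x.1 + h/2)^2 + x.2^2))^2)
      - ∫ x in annulus h R, x.2^4 * x.1^2 / (x.1^2+x.2^2)^4| ≤ 768 * π := by
  rw [← integral_sub (integrable_fh hh hhR) (integrable_g hh)]
  calc |∫ x in annulus h R,
          (x.2^4 * x.1^2 / (((x.1 - h/2)^2 + x.2^2) * ((x.1 + h/2)^2 + x.2^2))^2
            - x.2^4 * x.1^2 / (x.1^2+x.2^2)^4)|
      ≤ ∫ x in annulus h R,
          |x.2^4 * x.1^2 / (((x.1 - h/2)^2 + x.2^2) * ((x.1 + h/2)^2 + x.2^2))^2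
            - x.2^4 * x.1^2 / (x.1^2+x.2^2)^4| := by
        simpa [Real.norm_eq_abs] using abs_integral_le_integral_abs
          (μ := volume.restrict (annulus h R))
          (f := fun x : ℝ × ℝ =>
            x.2^4 * x.1^2 / (((x.1 - h/2)^2 + x.2^2) * ((x.1 + h/2)^2 + x.2^2))^2
            - x.2^4 * x.1^2 / (x.1^2+x.2^2)^4)
    _ ≤ ∫ x in annulus h R, 768 * h^2 * (((x.1^2+x.2^2)^2)⁻¹) := by
        apply integral_mono_of_nonneg (Eventually.of_forall fun x => abs_nonneg _)
          (integrable_maj hh)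
        apply ae_restrict_of_forall_mem (annulus_meas h R)
        intro x hx
        exact pointwise_bound hh hx.1
    _ = 768 * h^2 * ∫ x in annulus h R, ((x.1^2+x.2^2)^2)⁻¹ := integral_const_mul _ _
    _ = 768 * h^2 * (π * ((h^2)⁻¹ - (R^2)⁻¹)) := by rw [P2 hh hhR]
    _ ≤ 768 * π := by
        have h1 : h^2 * ((h^2)⁻¹ - (R^2)⁻¹) ≤ 1 := by
          rw [mul_sub, mul_inv_cancel₀ (by positivity : (h:ℝ)^2 ≠ 0)]
          have : 0 ≤ h^2 * (R^2)⁻¹ := by positivity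
          linarith
        nlinarith [pi_pos, mul_le_mul_of_nonneg_left h1 (le_of_lt pi_pos)]


/-- `(1/log(R/h)) ∫_{A_{h,R}(0)} x₂⁴x₁²/(((x₁−h/2)²+x₂²)((x₁+h/2)²+x₂²))² dx
→ π/8` as `h → 0⁺`. -/
theorem annulus_F2_integral_limit (R : ℝ) (hR : 0 < R) :
    Tendsto (fun h : ℝ => (1/Real.log (R/h)) *
        ∫ x in annulus h R,
          x.2^4 * x.1^2 / (((x.1 - h/2)^2 + x.2^2) * ((x.1 + h/2)^2 + x.2^2))^2)
      (nhdsWithin 0 (Set.Ioo 0 R)) (nhds (π/8)) := by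
  set F : ℝ → ℝ := fun h => (1/Real.log (R/h)) *
      ∫ x in annulus h R,
        x.2^4 * x.1^2 / (((x.1 - h/2)^2 + x.2^2) * ((x.1 + h/2)^2 + x.2^2))^2 with hF
  have hbound : ∀ h ∈ Set.Ioo (0:ℝ) R, |F h - π/8| ≤ 768*π / Real.log (R/h) := by
    intro h hh
    obtain ⟨hh0, hhR⟩ := hh
    have hL : 0 < Real.log (R/h) := Real.log_pos (by rw [lt_div_iff₀ hh0]; linarith)
    have hg := P1 hh0 hhR
    have key : ∀ I : ℝ, (1/Real.log (R/h)) * I - π/8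
        = (I - Real.log (R/h) * (π/8)) / Real.log (R/h) := by
      intro I
      field_simp
    have key2 : F h - π/8
        = ((∫ x in annulus h R,
              x.2^4 * x.1^2 / (((x.1 - h/2)^2 + x.2^2) * ((x.1 + h/2)^2 + x.2^2))^2)
            - ∫ x in annulus h R, x.2^4 * x.1^2 / (x.1^2+x.2^2)^4) / Real.log (R/h) := by
      rw [hF]
      simp only
      rw [key, ← hg]
    rw [key2, abs_div, abs_of_pos hL]
    gcongr
    exact error_bound hh0 hhR
  have hLtop : Tendsto (fun h : ℝ => Real.log (R/h)) (𝓝[Set.Ioo 0 R] 0) atTop := by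
    have h1 : Tendsto (fun h : ℝ => Real.log h) (𝓝[Set.Ioo 0 R] 0) atBot :=
      Real.tendsto_log_nhdsGT_zero.mono_left
        (nhdsWithin_mono 0 Set.Ioo_subset_Ioi_self)
    have h2 : Tendsto (fun h : ℝ => Real.log R - Real.log h) (𝓝[Set.Ioo 0 R] 0) atTop :=
      tendsto_atTop_add_const_left _ _ (tendsto_neg_atBot_atTop.comp h1)
    apply h2.congr'
    filter_upwards [self_mem_nhdsWithin] with h hh
    rw [Real.log_div hR.ne' (ne_of_gt hh.1)]
  have h0 : Tendsto (fun h : ℝ => 768*π / Real.log (R/h)) (𝓝[Set.Ioo 0 R] 0) (𝓝 0) :=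
    tendsto_const_nhds.div_atTop hLtop
  have hsq : Tendsto (fun h : ℝ => F h - π/8) (𝓝[Set.Ioo 0 R] 0) (𝓝 0) := by
    apply squeeze_zero_norm' _ h0
    filter_upwards [self_mem_nhdsWithin] with h hh
    rw [Real.norm_eq_abs]
    exact hbound h hh
  have := hsq.add_const (π/8)
  simpa using this
end
end

section
/- Let s ∈ ℝ and R > 0. Then the contribution of the core vanishes in the dipole energy scaling: as h → 0⁺ (with h < R), 𝒢(v̄_h; B_h(0) \ {(h/2,0), (−h/2,0)}) / (h² · log(R/h)) converges to 0. -/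
open Real MeasureTheory Filter Pointwise

noncomputable section

/-! ### Auxiliary material -/

/-- Directional derivative along `v`. -/
def pdv (v : ℝ × ℝ) (f : ℝ × ℝ → ℝ) (x : ℝ × ℝ) : ℝ := fderiv ℝ f x v

lemma pd1_eq_pdv (f : ℝ × ℝ → ℝ) : pd1 f = pdv (1,0) f := rfl

lemma pd2_eq_pdv (f : ℝ × ℝ → ℝ) : pd2 f = pdv (0,1) f := rfl

lemma pdv_affine {g f : ℝ×ℝ→ℝ} (a c b d : ℝ) (w z : ℝ×ℝ)
    (hf : f = fun y => a * g (c • y) + b * y.1 + d)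
    (hg : DifferentiableAt ℝ g (c • z)) :
    pdv w f z = a * c * pdv w g (c • z) + b * w.1 := by
  have hsm : HasFDerivAt (fun y : ℝ×ℝ => c • y)
      (c • ContinuousLinearMap.id ℝ (ℝ×ℝ)) z := (hasFDerivAt_id z).const_smul c
  have h1 : HasFDerivAt (fun y => g (c • y))
      ((fderiv ℝ g (c • z)).comp (c • ContinuousLinearMap.id ℝ (ℝ×ℝ))) z :=
    (hg.hasFDerivAt).comp z hsm
  have h2 : HasFDerivAt f
      (a • ((fderiv ℝ g (c • z)).comp (c • ContinuousLinearMap.id ℝ (ℝ×ℝ)))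
        + b • (ContinuousLinearMap.fst ℝ ℝ ℝ)) z := by
    rw [hf]
    exact ((h1.const_mul a).add
      (((ContinuousLinearMap.fst ℝ ℝ ℝ).hasFDerivAt).const_mul b)).add_const d
  have h3 := h2.fderiv
  simp only [pdv, h3]
  simp [ContinuousLinearMap.smul_apply, _root_.map_smul, smul_eq_mul]
  ring

lemma pdv_pdv_affine {g f : ℝ×ℝ→ℝ} (a c b d : ℝ) (v w x : ℝ×ℝ)
    (hf : f = fun y => a * g (c • y) + b * y.1 + d)
    (hg : ContDiffAt ℝ 2 g (c • x)) :
    pdv v (pdv w f) x = (a * c^2) * pdv v (pdv w g) (c • x) := by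
  have hcont : Continuous (fun z : ℝ×ℝ => c • z) := continuous_const_smul c
  have hev : ∀ᶠ z in nhds x, DifferentiableAt ℝ g (c • z) := by
    have h0 : ∀ᶠ p in nhds (c • x), ContDiffAt ℝ 2 g p := hg.eventually (by simp)
    exact (hcont.tendsto x).eventually (h0.mono fun p hp => hp.differentiableAt (by norm_num))
  have heq : pdv w f =ᶠ[nhds x] fun z => (a*c) * pdv w g (c • z) + 0 * z.1 + b * w.1 := by
    filter_upwards [hev] with z hz
    rw [pdv_affine a c b d w z hf hz]; ring
  have hg' : DifferentiableAt ℝ (pdv w g) (c • x) := by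
    have h1 : ContDiffAt ℝ 1 (fderiv ℝ g) (c • x) := hg.fderiv_right (by norm_num)
    exact (h1.differentiableAt (by norm_num)).clm_apply (differentiableAt_const w)
  have h4 : pdv v (pdv w f) x
      = pdv v (fun z => (a*c) * pdv w g (c • z) + 0 * z.1 + b * w.1) x := by
    unfold pdv at heq ⊢
    rw [heq.fderiv_eq]
  rw [h4, pdv_affine (a*c) c 0 (b*w.1) v x rfl hg']
  ring

lemma sq_pos_of_ne {p : ℝ × ℝ} (hp : p ≠ 0) : 0 < p.1^2 + p.2^2 := by
  rcases eq_or_ne p.1 0 with h1 | h1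
  · have h2 : p.2 ≠ 0 := fun h2 => hp (Prod.ext h1 h2)
    positivity
  · positivity

lemma vbar_contDiffAt (E ν : ℝ) {p : ℝ×ℝ} (hp : p ≠ 0) : ContDiffAt ℝ 2 (vbar E ν) p := by
  have hp2 : 0 < p.1^2 + p.2^2 := sq_pos_of_ne hp
  have hin : ContDiffAt ℝ 2 (fun x : ℝ×ℝ => x.1^2+x.2^2) p :=
    (((contDiff_fst.pow 2).add (contDiff_snd.pow 2)).contDiffAt)
  have hform : ContDiffAt ℝ 2
      (fun x : ℝ×ℝ => (E/(1-ν^2)) * ((x.1^2+x.2^2)/(16*π)) * Real.log (x.1^2+x.2^2)) p := by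
    have hlog : ContDiffAt ℝ 2 Real.log (p.1^2+p.2^2) :=
      Real.contDiffAt_log.mpr (ne_of_gt hp2)
    exact (contDiffAt_const.mul (hin.div_const _)).mul
      (ContDiffAt.comp (g := Real.log) (f := fun x : ℝ×ℝ => x.1^2+x.2^2) p hlog hin)
  apply hform.congr_of_eventuallyEq
  filter_upwards [eventually_ne_nhds hp] with x hx
  simp [vbar, hx]

lemma g_contDiffAt (E ν s : ℝ) {y : ℝ×ℝ} (h1 : y ≠ ((1/2 : ℝ), (0:ℝ)))
    (h2 : y ≠ ((-(1/2) : ℝ), (0:ℝ))) :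
    ContDiffAt ℝ 2 (vbarh E ν s 1) y := by
  have ha : ContDiffAt ℝ 2 (fun x : ℝ×ℝ => vbar E ν (x - (1/2, 0))) y := by
    have hne : y - ((1/2 : ℝ), (0:ℝ)) ≠ 0 := by
      simpa [sub_eq_zero] using h1
    exact (vbar_contDiffAt E ν hne).comp y (contDiffAt_id.sub contDiffAt_const)
  have hb : ContDiffAt ℝ 2 (fun x : ℝ×ℝ => vbar E ν (x + (1/2, 0))) y := by
    have hne : y + ((1/2 : ℝ), (0:ℝ)) ≠ 0 := by
      intro h
      apply h2
      have := eq_neg_of_add_eq_zero_left h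
      simpa [Prod.ext_iff] using this
    exact (vbar_contDiffAt E ν hne).comp y (contDiffAt_id.add contDiffAt_const)
  have : ContDiffAt ℝ 2 (fun x : ℝ×ℝ =>
      -s * (vbar E ν (x - (1/2, 0)) - vbar E ν (x + (1/2, 0)))) y :=
    contDiffAt_const.mul (ha.sub hb)
  exact this.congr_of_eventuallyEq (by filter_upwards with x; simp [vbarh])

lemma vbar_smul (E ν : ℝ) {h : ℝ} (hh : 0 < h) (z : ℝ×ℝ) :
    vbar E ν (h • z) = h^2 * vbar E ν z
      + (E/(1-ν^2)) * h^2 * Real.log (h^2) * (z.1^2+z.2^2) / (16*π) := by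
  rcases eq_or_ne z 0 with rfl | hz
  · simp [vbar]
  · have hz2 : 0 < z.1^2 + z.2^2 := sq_pos_of_ne hz
    have hhz : h • z ≠ 0 := smul_ne_zero hh.ne' hz
    rw [vbar, vbar, if_neg hhz, if_neg hz]
    have h1 : (h • z).1 = h * z.1 := rfl
    have h2 : (h • z).2 = h * z.2 := rfl
    rw [h1, h2]
    have h3 : (h*z.1)^2 + (h*z.2)^2 = h^2 * (z.1^2+z.2^2) := by ring
    rw [h3, Real.log_mul (by positivity) (by positivity)]
    ring

lemma vbarh_scale (E ν s : ℝ) {h : ℝ} (hh : 0 < h) :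
    vbarh E ν s h = fun x => h^2 * (vbarh E ν s 1) (h⁻¹ • x)
      + (2*s*(E/(1-ν^2))*h*Real.log (h^2)/(16*π)) * x.1 + 0 := by
  funext x
  have hx : x = h • (h⁻¹ • x) := by rw [smul_smul]; simp [hh.ne']
  have e1 : x - ((h/2 : ℝ), (0:ℝ)) = h • (h⁻¹ • x - ((1/2 : ℝ), (0:ℝ))) := by
    rw [smul_sub, ← hx]
    congr 1
    simp [Prod.ext_iff]
    ring
  have e2 : x + ((h/2 : ℝ), (0:ℝ)) = h • (h⁻¹ • x + ((1/2 : ℝ), (0:ℝ))) := by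
    rw [smul_add, ← hx]
    congr 1
    simp [Prod.ext_iff]
    ring
  rw [vbarh, e1, e2, vbar_smul E ν hh, vbar_smul E ν hh, vbarh]
  have hfst : (h⁻¹ • x).1 = h⁻¹ * x.1 := rfl
  have hsnd : (h⁻¹ • x).2 = h⁻¹ * x.2 := rfl
  simp only [Prod.fst_sub, Prod.snd_sub, Prod.fst_add, Prod.snd_add, hfst, hsnd]
  set K := E/(1-ν^2) with hK
  set A := vbar E ν (h⁻¹ • x - (1/2, 0)) with hA
  set B := vbar E ν (h⁻¹ • x + (1/2, 0)) with hB
  field_simp [Real.pi_ne_zero, hh.ne']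
  ring

lemma isOpen_ball2 (ξ : ℝ×ℝ) (r : ℝ) : IsOpen (ball2 ξ r) := by
  have : ball2 ξ r = (fun x : ℝ×ℝ => (x.1-ξ.1)^2 + (x.2-ξ.2)^2) ⁻¹' (Set.Iio (r^2)) := rfl
  rw [this]
  exact (Continuous.add (by fun_prop) (by fun_prop)).isOpen_preimage _ isOpen_Iio

lemma core_mem_iff {h : ℝ} (hh : 0 < h) (x : ℝ×ℝ) :
    x ∈ ball2 0 h \ {((h/2,0):ℝ×ℝ), ((-(h/2),0):ℝ×ℝ)} ↔
    h⁻¹ • x ∈ ball2 0 1 \ {((1/2,0):ℝ×ℝ), ((-(1/2),0):ℝ×ℝ)} := by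
  have hfst : (h⁻¹ • x).1 = h⁻¹ * x.1 := rfl
  have hsnd : (h⁻¹ • x).2 = h⁻¹ * x.2 := rfl
  have hb : (h⁻¹ • x ∈ ball2 0 1) ↔ x ∈ ball2 0 h := by
    simp only [ball2, Set.mem_setOf_eq, Prod.fst_zero, Prod.snd_zero, sub_zero, hfst, hsnd,
      one_pow]
    have e : (h⁻¹*x.1)^2+(h⁻¹*x.2)^2 = (x.1^2+x.2^2)/h^2 := by
      field_simp
    rw [e, div_lt_one (by positivity)]
  have hpt : ∀ p : ℝ×ℝ, h⁻¹ • x = p ↔ x = h • p := fun p => inv_smul_eq_iff₀ hh.ne'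
  have hp1 : h • ((1/2:ℝ),(0:ℝ)) = ((h/2:ℝ),(0:ℝ)) := by
    rw [Prod.smul_mk]
    norm_num [smul_eq_mul, mul_one_div]
  have hp2 : h • ((-(1/2):ℝ),(0:ℝ)) = ((-(h/2):ℝ),(0:ℝ)) := by
    rw [Prod.smul_mk]
    simp [smul_eq_mul]
    ring
  simp only [Set.mem_diff, Set.mem_insert_iff, Set.mem_singleton_iff, hb, hpt, hp1, hp2]

lemma energy_scale (E ν s : ℝ) {h : ℝ} (hh : 0 < h) :
    energy E ν (vbarh E ν s h) (ball2 0 h \ {((h/2,0):ℝ×ℝ), ((-(h/2),0):ℝ×ℝ)})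
      = h^2 * energy E ν (vbarh E ν s 1)
          (ball2 0 1 \ {((1/2,0):ℝ×ℝ), ((-(1/2),0):ℝ×ℝ)}) := by
  set g := vbarh E ν s 1 with hg
  set F := fun y => hessSq g y - ν * (lap g y)^2 with hF
  set D1 : Set (ℝ×ℝ) := ball2 0 1 \ {((1/2,0):ℝ×ℝ), ((-(1/2),0):ℝ×ℝ)} with hD1
  set Dh : Set (ℝ×ℝ) := ball2 0 h \ {((h/2,0):ℝ×ℝ), ((-(h/2),0):ℝ×ℝ)} with hDh
  have hmeasDh : MeasurableSet Dh :=
    ((isOpen_ball2 _ _).measurableSet).diff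
      (((measurableSet_singleton _).insert _))
  have hEq : Set.EqOn (fun x => hessSq (vbarh E ν s h) x - ν * (lap (vbarh E ν s h) x)^2)
      (fun x => F (h⁻¹ • x)) Dh := by
    intro x hx
    have hx1 : h⁻¹ • x ∈ D1 := (core_mem_iff hh x).1 hx
    have hp1 : h⁻¹ • x ≠ ((1/2:ℝ),(0:ℝ)) := fun hc => hx1.2 (Or.inl hc)
    have hp2 : h⁻¹ • x ≠ ((-(1/2):ℝ),(0:ℝ)) := fun hc => hx1.2 (Or.inr hc)
    have hgx : ContDiffAt ℝ 2 g (h⁻¹ • x) := g_contDiffAt E ν s hp1 hp2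
    have hf := vbarh_scale E ν s hh
    have hcc : h^2 * (h⁻¹)^2 = 1 := by field_simp
    have e11 := pdv_pdv_affine (h^2) h⁻¹ _ 0 (1,0) (1,0) x hf hgx
    have e12 := pdv_pdv_affine (h^2) h⁻¹ _ 0 (1,0) (0,1) x hf hgx
    have e21 := pdv_pdv_affine (h^2) h⁻¹ _ 0 (0,1) (1,0) x hf hgx
    have e22 := pdv_pdv_affine (h^2) h⁻¹ _ 0 (0,1) (0,1) x hf hgx
    simp only [hF, hessSq, lap, pd1_eq_pdv, pd2_eq_pdv, e11, e12, e21, e22, hcc, one_mul]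
    rfl
  have hset : h⁻¹ • Dh = D1 := by
    ext y
    rw [Set.mem_inv_smul_set_iff₀ hh.ne']
    rw [core_mem_iff hh (h • y)]
    rw [smul_smul, inv_mul_cancel₀ hh.ne', one_smul]
  have hint : (∫ x in Dh, (hessSq (vbarh E ν s h) x - ν * (lap (vbarh E ν s h) x)^2))
      = h^2 * ∫ y in D1, F y := by
    rw [setIntegral_congr_fun hmeasDh hEq]
    rw [MeasureTheory.Measure.setIntegral_comp_smul_of_pos volume F Dh (inv_pos.mpr hh)]
    rw [hset]
    have hfr : Module.finrank ℝ (ℝ × ℝ) = 2 := by simp [Module.finrank_prod]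
    rw [hfr]
    rw [← inv_pow, inv_inv, smul_eq_mul]
  rw [energy, energy, hint]
  ring

/-- The core contribution vanishes in the dipole energy scaling:
`𝒢(v̄_h; B_h(0) \ {(h/2,0), (−h/2,0)}) / (h² log(R/h)) → 0` as `h → 0⁺`. -/
theorem dipole_core_energy_vanishes (E ν : ℝ) (hE : 0 < E) (hν₁ : -1 < ν) (hν₂ : ν < 1/2)
    (s R : ℝ) (hR : 0 < R) :
    Tendsto (fun h : ℝ =>
        energy E ν (vbarh E ν s h)
            (ball2 0 h \ {((h/2, 0) : ℝ × ℝ), ((-(h/2), 0) : ℝ × ℝ)}) /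
          (h^2 * Real.log (R/h)))
      (nhdsWithin 0 (Set.Ioo 0 R)) (nhds 0) := by
  set C := energy E ν (vbarh E ν s 1)
      (ball2 0 1 \ {((1/2,0):ℝ×ℝ), ((-(1/2),0):ℝ×ℝ)}) with hC
  have hlim : Tendsto (fun h : ℝ => C / Real.log (R/h))
      (nhdsWithin 0 (Set.Ioo 0 R)) (nhds 0) := by
    apply Tendsto.div_atTop tendsto_const_nhds
    apply Real.tendsto_log_atTop.comp
    have h2 : Tendsto (fun h : ℝ => h⁻¹) (nhdsWithin 0 (Set.Ioo 0 R)) atTop :=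
      tendsto_inv_nhdsGT_zero.mono_left (nhdsWithin_mono _ Set.Ioo_subset_Ioi_self)
    have h3 := h2.const_mul_atTop hR
    exact h3.congr fun x => (div_eq_mul_inv R x).symm
  apply hlim.congr'
  filter_upwards [self_mem_nhdsWithin] with h hh
  obtain ⟨hh0, hhR⟩ := hh
  rw [energy_scale E ν s hh0, mul_div_mul_left _ _ (pow_ne_zero 2 hh0.ne')]
end
end

section
/- Let E > 0, ν ∈ (−1, 1/2), s ∈ ℝ, 0 < ε < R, and let f(x) := (s/(16π))·(E/(1−ν²))·(α_ε + β_ε/|x|² + γ_ε·|x|² + 2·log(|x|²))·x₁ on ℝ² \ {0}, with α_ε := 2(R²−ε²)/(R²+ε²) − 2·log(R²), β_ε := 2ε²R²/(R²+ε²), γ_ε := −2/(R²+ε²). Then: (i) for every x with |x| = R one has f(x) = 0 and ∇f(x) = 0 (clamped outer boundary); (ii) for every x with |x| = ε the Hessian of f applied to the tangent vector vanishes, i.e. ∇²f(x)·(−x₂, x₁) = (0,0) (traction-free inner boundary). -/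
open Real MeasureTheory Filter

noncomputable section

namespace MyAux

def GG (a b c d e t : ℝ) : ℝ := a + b/t + c/t^2 + d*t + e*Real.log t
def GG' (a b c d e t : ℝ) : ℝ := -b/t^2 - 2*c/t^3 + d + e/t

lemma hasDerivAt_GG (a b c d e : ℝ) {t : ℝ} (ht : t ≠ 0) :
    HasDerivAt (fun t => GG a b c d e t) (GG' a b c d e t) t := by
  have h1 : HasDerivAt (fun t : ℝ => b/t) (b * (-(t^2)⁻¹)) t := by
    simpa [div_eq_mul_inv] using (hasDerivAt_inv ht).const_mul b
  have h2 : HasDerivAt (fun t : ℝ => c/t^2) (c * (-(2*t^(2-1)) / (t^2)^2)) t := by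
    simpa [div_eq_mul_inv] using ((hasDerivAt_pow 2 t).inv (pow_ne_zero 2 ht)).const_mul c
  have h3 : HasDerivAt (fun t : ℝ => d*t) d t := by
    simpa using (hasDerivAt_id t).const_mul d
  have h4 : HasDerivAt (fun t : ℝ => e*Real.log t) (e * t⁻¹) t := by
    simpa using (Real.hasDerivAt_log ht).const_mul e
  have := ((((hasDerivAt_const t a).add h1).add h2).add h3).add h4
  refine this.congr_deriv ?_
  simp only [GG']; field_simp; ring

def dT (x : ℝ × ℝ) : ℝ × ℝ →L[ℝ] ℝ :=
  (2*x.1) • ContinuousLinearMap.fst ℝ ℝ ℝ + (2*x.2) • ContinuousLinearMap.snd ℝ ℝ ℝ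

lemma hasFDerivAt_T (x : ℝ × ℝ) :
    HasFDerivAt (fun y : ℝ × ℝ => y.1^2 + y.2^2) (dT x) x := by
  have h1 : HasFDerivAt (fun y : ℝ × ℝ => y.1) (ContinuousLinearMap.fst ℝ ℝ ℝ) x := hasFDerivAt_fst
  have h2 : HasFDerivAt (fun y : ℝ × ℝ => y.2) (ContinuousLinearMap.snd ℝ ℝ ℝ) x := hasFDerivAt_snd
  have := (h1.mul h1).add (h2.mul h2)
  refine HasFDerivAt.congr_of_eventuallyEq (this.congr_fderiv ?_) (Filter.Eventually.of_forall fun y => ?_)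
  · ext w <;> simp [dT] <;> ring
  · simp only [Pi.add_apply, Pi.mul_apply]; ring

lemma hasFDerivAt_GT (a b c d e : ℝ) {x : ℝ × ℝ} (hx : x.1^2 + x.2^2 ≠ 0) :
    HasFDerivAt (fun y : ℝ × ℝ => GG a b c d e (y.1^2 + y.2^2))
      ((GG' a b c d e (x.1^2 + x.2^2)) • dT x) x :=
  by have := (hasDerivAt_GG a b c d e hx).comp_hasFDerivAt x (hasFDerivAt_T x); exact this

lemma hasFDerivAt_csq (c : ℝ) (x : ℝ × ℝ) :
    HasFDerivAt (fun y : ℝ × ℝ => c * y.1^2) ((2*c*x.1) • ContinuousLinearMap.fst ℝ ℝ ℝ) x := by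
  have h1 : HasFDerivAt (fun y : ℝ × ℝ => y.1) (ContinuousLinearMap.fst ℝ ℝ ℝ) x := hasFDerivAt_fst
  have := (h1.mul h1).const_mul c
  refine HasFDerivAt.congr_of_eventuallyEq (this.congr_fderiv ?_) (Filter.Eventually.of_forall fun y => ?_)
  · ext w <;> simp <;> ring
  · simp only [Pi.mul_apply]; ring

lemma hasFDerivAt_c12 (c : ℝ) (x : ℝ × ℝ) :
    HasFDerivAt (fun y : ℝ × ℝ => c * (y.1 * y.2))
      ((c*x.2) • ContinuousLinearMap.fst ℝ ℝ ℝ + (c*x.1) • ContinuousLinearMap.snd ℝ ℝ ℝ) x := by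
  have h1 : HasFDerivAt (fun y : ℝ × ℝ => y.1) (ContinuousLinearMap.fst ℝ ℝ ℝ) x := hasFDerivAt_fst
  have h2 : HasFDerivAt (fun y : ℝ × ℝ => y.2) (ContinuousLinearMap.snd ℝ ℝ ℝ) x := hasFDerivAt_snd
  have := (h1.mul h2).const_mul c
  refine this.congr_fderiv ?_
  ext w <;> simp <;> ring

end MyAux

/-- The edge-dislocation Airy function `W^s_{0,ε}` satisfies the clamped
boundary conditions `f = 0`, `∇f = 0` on the outer circle `|x| = R`, and the traction-free
condition `∇²f·t = 0` on the inner circle `|x| = ε`, where `t = (−x₂, x₁)` is tangent. -/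
theorem edge_dislocation_boundary_conditions (E ν s ε R : ℝ)
    (hE : 0 < E) (hν₁ : -1 < ν) (hν₂ : ν < 1/2) (hε : 0 < ε) (hεR : ε < R) :
    let αe : ℝ := 2*(R^2 - ε^2)/(R^2 + ε^2) - 2*Real.log (R^2)
    let βe : ℝ := 2*ε^2*R^2/(R^2 + ε^2)
    let γe : ℝ := -2/(R^2 + ε^2)
    let f : ℝ × ℝ → ℝ := fun x =>
      (s/(16*π)) * (E/(1-ν^2)) *
        (αe + βe/(x.1^2 + x.2^2) + γe*(x.1^2 + x.2^2) + 2*Real.log (x.1^2 + x.2^2)) * x.1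
    -- (i) clamped outer boundary
    (∀ x : ℝ × ℝ, x.1^2 + x.2^2 = R^2 → f x = 0 ∧ fderiv ℝ f x = 0) ∧
    -- (ii) traction-free inner boundary: `∇²f(x)·(−x₂, x₁) = (0,0)`
    (∀ x : ℝ × ℝ, x.1^2 + x.2^2 = ε^2 →
      pd1 (pd1 f) x * (-x.2) + pd1 (pd2 f) x * x.1 = 0 ∧
      pd2 (pd1 f) x * (-x.2) + pd2 (pd2 f) x * x.1 = 0) := by
  intro αe βe γe f
  set K : ℝ := (s/(16*π)) * (E/(1-ν^2)) with hK
  have hα : αe = 2*(R^2 - ε^2)/(R^2 + ε^2) - 2*Real.log (R^2) := rfl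
  have hβ : βe = 2*ε^2*R^2/(R^2 + ε^2) := rfl
  have hγ : γe = -2/(R^2 + ε^2) := rfl
  have hR : (0:ℝ) < R := lt_trans hε hεR
  have hRe : R^2 + ε^2 ≠ 0 := by positivity
  have hεne : ε ≠ 0 := ne_of_gt hε
  have hRne : R ≠ 0 := ne_of_gt hR
  have hfeq : f = fun y : ℝ × ℝ => (K * MyAux.GG αe βe 0 γe 2 (y.1^2 + y.2^2)) * y.1 := by
    funext y
    show (s/(16*π)) * (E/(1-ν^2)) *
        (αe + βe/(y.1^2 + y.2^2) + γe*(y.1^2 + y.2^2) + 2*Real.log (y.1^2 + y.2^2)) * y.1 = _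
    simp only [MyAux.GG, hK]; ring
  -- key scalar values
  have hgR : MyAux.GG αe βe 0 γe 2 (R^2) = 0 := by
    rw [hα, hβ, hγ]; simp only [MyAux.GG]; field_simp; ring
  have hg'R : MyAux.GG' αe βe 0 γe 2 (R^2) = 0 := by
    rw [hβ, hγ]; simp only [MyAux.GG']; field_simp; ring
  have hg'ε : MyAux.GG' αe βe 0 γe 2 (ε^2) = 0 := by
    rw [hβ, hγ]; simp only [MyAux.GG']; field_simp; ring
  have hgbε : MyAux.GG γe 2 (-βe) 0 0 (ε^2) = 0 := by
    rw [hβ, hγ]; simp only [MyAux.GG]; field_simp; ring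
  -- first derivative
  have hT : ∀ y : ℝ × ℝ, y.1^2 + y.2^2 ≠ 0 → HasFDerivAt f
      ((K * MyAux.GG αe βe 0 γe 2 (y.1^2 + y.2^2)) • ContinuousLinearMap.fst ℝ ℝ ℝ
        + y.1 • (K • (MyAux.GG' αe βe 0 γe 2 (y.1^2 + y.2^2) • MyAux.dT y))) y := by
    intro y hy
    rw [hfeq]
    have h1 : HasFDerivAt (fun y : ℝ × ℝ => y.1) (ContinuousLinearMap.fst ℝ ℝ ℝ) y :=
      hasFDerivAt_fst
    exact ((MyAux.hasFDerivAt_GT αe βe 0 γe 2 hy).const_mul K).mul h1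
  set f1 : ℝ × ℝ → ℝ := fun y => K * MyAux.GG αe βe 0 γe 2 (y.1^2 + y.2^2)
      + (2*K*y.1^2) * MyAux.GG γe 2 (-βe) 0 0 (y.1^2 + y.2^2) with hf1
  set f2 : ℝ × ℝ → ℝ := fun y => (2*K*(y.1*y.2)) * MyAux.GG γe 2 (-βe) 0 0 (y.1^2 + y.2^2)
      with hf2
  have hpd1 : ∀ y : ℝ × ℝ, y.1^2 + y.2^2 ≠ 0 → pd1 f y = f1 y := by
    intro y hy
    simp only [pd1, (hT y hy).fderiv, hf1, ContinuousLinearMap.add_apply,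
      ContinuousLinearMap.smul_apply, ContinuousLinearMap.coe_fst', ContinuousLinearMap.coe_snd',
      smul_eq_mul, MyAux.dT, MyAux.GG, MyAux.GG']
    ring
  have hpd2 : ∀ y : ℝ × ℝ, y.1^2 + y.2^2 ≠ 0 → pd2 f y = f2 y := by
    intro y hy
    simp only [pd2, (hT y hy).fderiv, hf2, ContinuousLinearMap.add_apply,
      ContinuousLinearMap.smul_apply, ContinuousLinearMap.coe_fst', ContinuousLinearMap.coe_snd',
      smul_eq_mul, MyAux.dT, MyAux.GG, MyAux.GG']
    ring
  have hUopen : IsOpen {y : ℝ × ℝ | y.1^2 + y.2^2 ≠ 0} := by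
    have hc : Continuous (fun y : ℝ × ℝ => y.1^2 + y.2^2) := by fun_prop
    exact IsOpen.preimage hc isOpen_compl_singleton
  constructor
  · intro x hx
    have hxne : x.1^2 + x.2^2 ≠ 0 := by rw [hx]; positivity
    constructor
    · rw [hfeq]; simp only [hx, hgR]; ring
    · rw [(hT x hxne).fderiv, hx, hgR, hg'R]
      simp
  · intro x hx
    have hxne : x.1^2 + x.2^2 ≠ 0 := by rw [hx]; positivity
    have hmem : {y : ℝ × ℝ | y.1^2 + y.2^2 ≠ 0} ∈ nhds x := hUopen.mem_nhds hxne
    have hev1 : pd1 f =ᶠ[nhds x] f1 := Filter.eventuallyEq_of_mem hmem hpd1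
    have hev2 : pd2 f =ᶠ[nhds x] f2 := Filter.eventuallyEq_of_mem hmem hpd2
    have h1f : HasFDerivAt f1
        (K • (MyAux.GG' αe βe 0 γe 2 (x.1^2 + x.2^2) • MyAux.dT x)
          + ((2*K*x.1^2) • (MyAux.GG' γe 2 (-βe) 0 0 (x.1^2 + x.2^2) • MyAux.dT x)
            + MyAux.GG γe 2 (-βe) 0 0 (x.1^2 + x.2^2) •
              ((2*(2*K)*x.1) • ContinuousLinearMap.fst ℝ ℝ ℝ))) x := by
      exact ((MyAux.hasFDerivAt_GT αe βe 0 γe 2 hxne).const_mul K).add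
        ((MyAux.hasFDerivAt_csq (2*K) x).mul (MyAux.hasFDerivAt_GT γe 2 (-βe) 0 0 hxne))
    have h2f : HasFDerivAt f2
        ((2*K*(x.1*x.2)) • (MyAux.GG' γe 2 (-βe) 0 0 (x.1^2 + x.2^2) • MyAux.dT x)
          + MyAux.GG γe 2 (-βe) 0 0 (x.1^2 + x.2^2) •
            (((2*K)*x.2) • ContinuousLinearMap.fst ℝ ℝ ℝ
              + ((2*K)*x.1) • ContinuousLinearMap.snd ℝ ℝ ℝ)) x := by
      exact (MyAux.hasFDerivAt_c12 (2*K) x).mul (MyAux.hasFDerivAt_GT γe 2 (-βe) 0 0 hxne)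
    have e1 : fderiv ℝ (pd1 f) x = fderiv ℝ f1 x := hev1.fderiv_eq
    have e2 : fderiv ℝ (pd2 f) x = fderiv ℝ f2 x := hev2.fderiv_eq
    constructor
    · show fderiv ℝ (pd1 f) x (1,0) * (-x.2) + fderiv ℝ (pd2 f) x (1,0) * x.1 = 0
      rw [e1, e2, h1f.fderiv, h2f.fderiv]
      simp only [ContinuousLinearMap.add_apply, ContinuousLinearMap.smul_apply,
        ContinuousLinearMap.coe_fst', ContinuousLinearMap.coe_snd', smul_eq_mul, MyAux.dT]
      rw [hx, hg'ε, hgbε]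
      ring
    · show fderiv ℝ (pd1 f) x (0,1) * (-x.2) + fderiv ℝ (pd2 f) x (0,1) * x.1 = 0
      rw [e1, e2, h1f.fderiv, h2f.fderiv]
      simp only [ContinuousLinearMap.add_apply, ContinuousLinearMap.smul_apply,
        ContinuousLinearMap.coe_fst', ContinuousLinearMap.coe_snd', smul_eq_mul, MyAux.dT]
      rw [hx, hg'ε, hgbε]
      ring
end
end

section
/- Let E > 0, ν ∈ (−1, 1/2), s ∈ ℝ, and 0 < ε < R. With W^s_{0,ε} defined via α_ε, β_ε, γ_ε as in the context, the load term on the core circle equals: (s/(2πε)) · ∫₀^{2π} (∂_{x₁} W^s_{0,ε})(ε·cos t, ε·sin t) · ε dt = −(s²/(4π))·(E/(1−ν²))·( log(R/ε) − (R²−ε²)/(R²+ε²) ), where ∂_{x₁}W^s_{0,ε} is computed from the annulus formula (which is smooth in a neighborhood of the circle |x| = ε inside the annulus). -/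
open Real MeasureTheory Filter

noncomputable section

lemma pd1_formula (C a b c : ℝ) (x : ℝ × ℝ) (hx : x.1^2 + x.2^2 ≠ 0) :
    pd1 (fun p : ℝ × ℝ => C * (a + b/(p.1^2+p.2^2) + c*(p.1^2+p.2^2) + 2*Real.log (p.1^2+p.2^2)) * p.1) x
    = C * ((-b/(x.1^2+x.2^2)^2 + c + 2/(x.1^2+x.2^2)) * (2*x.1) * x.1
        + (a + b/(x.1^2+x.2^2) + c*(x.1^2+x.2^2) + 2*Real.log (x.1^2+x.2^2))) := by
  set q : ℝ := x.1^2 + x.2^2 with hqdef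
  have hfst : HasFDerivAt (fun p : ℝ × ℝ => p.1) (ContinuousLinearMap.fst ℝ ℝ ℝ) x :=
    hasFDerivAt_fst
  have hsnd : HasFDerivAt (fun p : ℝ × ℝ => p.2) (ContinuousLinearMap.snd ℝ ℝ ℝ) x :=
    hasFDerivAt_snd
  have hq : HasFDerivAt (fun p : ℝ × ℝ => p.1^2 + p.2^2)
      ((2*x.1) • ContinuousLinearMap.fst ℝ ℝ ℝ + (2*x.2) • ContinuousLinearMap.snd ℝ ℝ ℝ) x := by
    have h1 := (hfst.mul hfst).add (hsnd.mul hsnd)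
    have heq : (fun p : ℝ × ℝ => p.1^2 + p.2^2) = fun p : ℝ × ℝ => p.1*p.1 + p.2*p.2 := by
      funext p; ring
    rw [heq]
    refine HasFDerivAt.congr_fderiv h1 ?_
    apply ContinuousLinearMap.ext
    intro y
    simp [ContinuousLinearMap.add_apply, ContinuousLinearMap.smul_apply]
    ring
  have hh : HasDerivAt (fun u : ℝ => a + b/u + c*u + 2*Real.log u)
      (-b/q^2 + c + 2/q) q := by
    have h1 : HasDerivAt (fun u : ℝ => b/u) (-b/q^2) q := by
      have := (hasDerivAt_inv hx).const_mul b
      simpa [div_eq_mul_inv, neg_div, mul_comm] using this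
    have h2 : HasDerivAt (fun u : ℝ => c*u) c q := by
      simpa using (hasDerivAt_id q).const_mul c
    have h3 : HasDerivAt (fun u : ℝ => 2*Real.log u) (2/q) q := by
      simpa [div_eq_mul_inv] using (Real.hasDerivAt_log hx).const_mul 2
    exact HasDerivAt.congr_deriv ((((hasDerivAt_const q a).add h1).add h2).add h3) (by ring)
  have hg : HasFDerivAt (fun p : ℝ × ℝ => a + b/(p.1^2+p.2^2) + c*(p.1^2+p.2^2) + 2*Real.log (p.1^2+p.2^2))
      ((-b/q^2 + c + 2/q) • ((2*x.1) • ContinuousLinearMap.fst ℝ ℝ ℝ + (2*x.2) • ContinuousLinearMap.snd ℝ ℝ ℝ)) x :=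
    by have := hh.comp_hasFDerivAt x hq; exact this
  have hCg := hg.const_mul C
  have hW := hCg.mul hfst
  have := hW.fderiv
  rw [pd1]; erw [this]
  simp [ContinuousLinearMap.add_apply, ContinuousLinearMap.smul_apply]
  ring

/-- The load term of the edge-dislocation Airy function `W^s_{0,ε}` on the
core circle `∂B_ε(0)`:
`(s/(2πε)) ∫_{∂B_ε(0)} ∂_{x₁}W^s_{0,ε} dH¹ = −(s²/(4π))·(E/(1−ν²))·(log(R/ε) − (R²−ε²)/(R²+ε²))`. -/
theorem edge_dislocation_core_load (E ν s ε R : ℝ)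
    (hE : 0 < E) (hν₁ : -1 < ν) (hν₂ : ν < 1/2) (hε : 0 < ε) (hεR : ε < R) :
    let αe : ℝ := 2*(R^2 - ε^2)/(R^2 + ε^2) - 2*Real.log (R^2)
    let βe : ℝ := 2*ε^2*R^2/(R^2 + ε^2)
    let γe : ℝ := -2/(R^2 + ε^2)
    let W : ℝ × ℝ → ℝ := fun x =>
      (s/(16*π)) * (E/(1-ν^2)) *
        (αe + βe/(x.1^2 + x.2^2) + γe*(x.1^2 + x.2^2) + 2*Real.log (x.1^2 + x.2^2)) * x.1
    (s/(2*π*ε)) * ∫ t in (0:ℝ)..(2*π), pd1 W (ε * Real.cos t, ε * Real.sin t) * ε =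
      -(s^2/(4*π)) * (E/(1-ν^2)) * (Real.log (R/ε) - (R^2 - ε^2)/(R^2 + ε^2)) := by
  intro αe βe γe W
  have hπ := Real.pi_pos
  have hε2 : (ε:ℝ)^2 ≠ 0 := by positivity
  set C : ℝ := (s/(16*π)) * (E/(1-ν^2)) with hC
  have hW : W = fun x : ℝ × ℝ =>
      C * (αe + βe/(x.1^2 + x.2^2) + γe*(x.1^2 + x.2^2) + 2*Real.log (x.1^2 + x.2^2)) * x.1 := rfl
  have hpt : ∀ t : ℝ, (ε*Real.cos t)^2 + (ε*Real.sin t)^2 = ε^2 := by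
    intro t
    have h := Real.sin_sq_add_cos_sq t
    nlinarith [h]
  set d1 : ℝ := C * ((-βe/(ε^2)^2 + γe + 2/ε^2) * 2 * ε^2) * ε with hd1
  set d2 : ℝ := C * (αe + βe/ε^2 + γe*ε^2 + 2*Real.log (ε^2)) * ε with hd2
  have key : ∀ t : ℝ, pd1 W (ε * Real.cos t, ε * Real.sin t) * ε
      = d1 * Real.cos t ^ 2 + d2 := by
    intro t
    have hx : ((ε * Real.cos t, ε * Real.sin t) : ℝ × ℝ).1^2
        + ((ε * Real.cos t, ε * Real.sin t) : ℝ × ℝ).2^2 ≠ 0 := by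
      simpa [hpt t] using hε2
    have h0 := pd1_formula C αe βe γe (ε * Real.cos t, ε * Real.sin t) hx
    rw [hW]
    rw [h0]
    simp only [hpt t]
    rw [hd1, hd2]
    ring
  rw [intervalIntegral.integral_congr (g := fun t => d1 * Real.cos t ^ 2 + d2)
    (fun t _ => key t)]
  have hi1 : IntervalIntegrable (fun t : ℝ => d1 * Real.cos t ^ 2) volume 0 (2*π) :=
    (continuous_const.mul (Real.continuous_cos.pow 2)).intervalIntegrable _ _
  rw [intervalIntegral.integral_add hi1 intervalIntegrable_const,
    intervalIntegral.integral_const_mul, integral_cos_sq, intervalIntegral.integral_const]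
  simp only [Real.sin_two_pi, Real.cos_two_pi, Real.sin_zero, Real.cos_zero, smul_eq_mul]
  have hν : (1:ℝ) - ν^2 ≠ 0 := by nlinarith
  have hRε : (R:ℝ)^2 + ε^2 ≠ 0 := by positivity
  have hlogε : Real.log (ε^2) = 2 * Real.log ε := by
    rw [Real.log_pow]; push_cast; ring
  have hlogR : Real.log (R^2) = 2 * Real.log R := by
    rw [Real.log_pow]; push_cast; ring
  have hlogdiv : Real.log (R/ε) = Real.log R - Real.log ε :=
    Real.log_div (by linarith) (ne_of_gt hε)
  rw [hd1, hd2, hC]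
  simp only [hlogdiv]
  have hβ : βe = 2*ε^2*R^2/(R^2 + ε^2) := rfl
  have hα : αe = 2*(R^2 - ε^2)/(R^2 + ε^2) - 2*Real.log (R^2) := rfl
  have hγ : γe = -2/(R^2 + ε^2) := rfl
  rw [hβ, hα, hγ, hlogR, hlogε]
  field_simp
  ring
end
end

section
/- Let ℓ > 0, let ϑ : [0,ℓ] → ℝ be continuously differentiable, let γ : [0,ℓ] → ℝ² be twice continuously differentiable with γ'(ξ) = (−sin ϑ(ξ), cos ϑ(ξ)) for every ξ, and set n(ξ) := (cos ϑ(ξ), sin ϑ(ξ)). Let v : ℝ² → ℝ be twice continuously differentiable on a neighborhood of the image of γ. Then the traction-free condition ∇²v(γ(ξ))·γ'(ξ) = (0,0) for every ξ ∈ [0,ℓ] holds if and only if there exist constants c₀, c₁, c₂ ∈ ℝ such that for every ξ ∈ [0,ℓ]: v(γ(ξ)) = c₀ + c₁·γ₁(ξ) + c₂·γ₂(ξ) and ⟨∇v(γ(ξ)), n(ξ)⟩ = c₁·cos ϑ(ξ) + c₂·sin ϑ(ξ); that is, v has the Dirichlet and Neumann traces of an affine function a(x) = c₀ + c₁x₁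 + c₂x₂ along the curve. -/
open Real MeasureTheory Filter

noncomputable section

/-- Chain rule along a curve in `ℝ²`, expressed via partial derivatives. -/
lemma hasDerivAt_comp_curve (f : ℝ × ℝ → ℝ) (γ : ℝ → ℝ × ℝ) (ξ a b : ℝ)
    (hγ : HasDerivAt γ (a, b) ξ) (hf : DifferentiableAt ℝ f (γ ξ)) :
    HasDerivAt (fun t => f (γ t)) (pd1 f (γ ξ) * a + pd2 f (γ ξ) * b) ξ := by
  have h : HasDerivAt (fun t => f (γ t)) (fderiv ℝ f (γ ξ) (a, b)) ξ :=
    hf.hasFDerivAt.comp_hasDerivAt ξ hγ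
  convert h using 1
  have hab : ((a, b) : ℝ × ℝ) = a • ((1:ℝ), (0:ℝ)) + b • ((0:ℝ), (1:ℝ)) := by
    simp [Prod.ext_iff]
  rw [hab, ContinuousLinearMap.map_add, ContinuousLinearMap.map_smul,
    ContinuousLinearMap.map_smul]
  simp [pd1, pd2, smul_eq_mul, mul_comm]

/-- Differentiability of a directional derivative of `f` when `fderiv f` is differentiable. -/
lemma pdw_hasFDerivAt (f : ℝ × ℝ → ℝ) (x : ℝ × ℝ) (w : ℝ × ℝ)
    (hf : DifferentiableAt ℝ (fderiv ℝ f) x) :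
    HasFDerivAt (fun y => fderiv ℝ f y w)
      ((ContinuousLinearMap.apply ℝ ℝ w).comp (fderiv ℝ (fderiv ℝ f) x)) x :=
  (ContinuousLinearMap.apply ℝ ℝ w).hasFDerivAt.comp x hf.hasFDerivAt

/-- Uniqueness of one-dimensional derivatives within a set with unique differentiability. -/
lemma deriv_unique_within {f : ℝ → ℝ} {s : Set ℝ} {x a b : ℝ}
    (hu : UniqueDiffWithinAt ℝ s x) (ha : HasDerivWithinAt f a s x)
    (hb : HasDerivWithinAt f b s x) : a = b :=
  UniqueDiffWithinAt.eq_deriv s hu ha hb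

/-- Along an arc-length parametrized curve `γ` with unit tangent
`γ' = (−sin ϑ, cos ϑ)` and unit normal `n = (cos ϑ, sin ϑ)`, the traction-free condition
`∇²v(γ(ξ))·γ'(ξ) = 0` holds on `[0,ℓ]` if and only if the Dirichlet and Neumann traces of `v`
along the curve are those of an affine function `a(x) = c₀ + c₁x₁ + c₂x₂`. -/
theorem traction_free_iff_affine_traces (ℓ : ℝ) (hℓ : 0 < ℓ)
    (ϑ : ℝ → ℝ) (γ : ℝ → ℝ × ℝ) (v : ℝ × ℝ → ℝ)
    (hϑ : ContDiff ℝ 1 ϑ) (hγ : ContDiff ℝ 2 γ)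
    (hγ' : ∀ ξ : ℝ, deriv γ ξ = (-Real.sin (ϑ ξ), Real.cos (ϑ ξ)))
    (U : Set (ℝ × ℝ)) (hU : IsOpen U) (hγU : ∀ ξ ∈ Set.Icc 0 ℓ, γ ξ ∈ U)
    (hv : ContDiffOn ℝ 2 v U) :
    (∀ ξ ∈ Set.Icc 0 ℓ,
        pd1 (pd1 v) (γ ξ) * (-Real.sin (ϑ ξ)) + pd1 (pd2 v) (γ ξ) * Real.cos (ϑ ξ) = 0 ∧
        pd2 (pd1 v) (γ ξ) * (-Real.sin (ϑ ξ)) + pd2 (pd2 v) (γ ξ) * Real.cos (ϑ ξ) = 0) ↔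
      (∃ c₀ c₁ c₂ : ℝ, ∀ ξ ∈ Set.Icc 0 ℓ,
        v (γ ξ) = c₀ + c₁ * (γ ξ).1 + c₂ * (γ ξ).2 ∧
        pd1 v (γ ξ) * Real.cos (ϑ ξ) + pd2 v (γ ξ) * Real.sin (ϑ ξ) =
          c₁ * Real.cos (ϑ ξ) + c₂ * Real.sin (ϑ ξ)) := by
  set s : Set ℝ := Set.Icc 0 ℓ with hs
  -- derivative of the curve
  have hγd : ∀ ξ : ℝ, HasDerivAt γ (-Real.sin (ϑ ξ), Real.cos (ϑ ξ)) ξ := by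
    intro ξ
    have h1 : DifferentiableAt ℝ γ ξ := (hγ.differentiable (by norm_num)).differentiableAt
    have := h1.hasDerivAt
    rwa [hγ' ξ] at this
  have hγ1 : ∀ ξ : ℝ, HasDerivAt (fun t => (γ t).1) (-Real.sin (ϑ ξ)) ξ := by
    intro ξ
    exact (ContinuousLinearMap.fst ℝ ℝ ℝ).hasFDerivAt.comp_hasDerivAt ξ (hγd ξ)
  have hγ2 : ∀ ξ : ℝ, HasDerivAt (fun t => (γ t).2) (Real.cos (ϑ ξ)) ξ := by
    intro ξ
    exact (ContinuousLinearMap.snd ℝ ℝ ℝ).hasFDerivAt.comp_hasDerivAt ξ (hγd ξ)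
  -- differentiability of v and its derivative on U
  have hvdiff : ∀ x ∈ U, DifferentiableAt ℝ v x := fun x hx =>
    (hv.contDiffAt (hU.mem_nhds hx)).differentiableAt (by norm_num)
  have hfdiff : ∀ x ∈ U, DifferentiableAt ℝ (fderiv ℝ v) x := fun x hx =>
    ((hv.contDiffAt (hU.mem_nhds hx)).fderiv_right (m := 1) (by norm_num)).differentiableAt
      (by norm_num)
  have hsymm : ∀ x ∈ U, IsSymmSndFDerivAt ℝ v x := fun x hx =>
    (hv.contDiffAt (hU.mem_nhds hx)).isSymmSndFDerivAt (by norm_num)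
  have hpd : ∀ x ∈ U, ∀ w u : ℝ × ℝ,
      fderiv ℝ (fun y => fderiv ℝ v y w) x u = fderiv ℝ (fderiv ℝ v) x u w := by
    intro x hx w u
    rw [(pdw_hasFDerivAt v x w (hfdiff x hx)).fderiv]
    rfl
  have h21 : ∀ x ∈ U, pd2 (pd1 v) x = pd1 (pd2 v) x := by
    intro x hx
    have e1 : pd2 (pd1 v) x = fderiv ℝ (fderiv ℝ v) x (0, 1) (1, 0) := hpd x hx (1, 0) (0, 1)
    have e2 : pd1 (pd2 v) x = fderiv ℝ (fderiv ℝ v) x (1, 0) (0, 1) := hpd x hx (0, 1) (1, 0)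
    rw [e1, e2, hsymm x hx (0, 1) (1, 0)]
  -- derivatives along the curve
  have Dv : ∀ ξ ∈ s, HasDerivAt (fun t => v (γ t))
      (pd1 v (γ ξ) * (-Real.sin (ϑ ξ)) + pd2 v (γ ξ) * Real.cos (ϑ ξ)) ξ :=
    fun ξ hξ => hasDerivAt_comp_curve v γ ξ _ _ (hγd ξ) (hvdiff _ (hγU ξ hξ))
  have D1 : ∀ ξ ∈ s, HasDerivAt (fun t => pd1 v (γ t))
      (pd1 (pd1 v) (γ ξ) * (-Real.sin (ϑ ξ)) + pd2 (pd1 v) (γ ξ) * Real.cos (ϑ ξ)) ξ :=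
    fun ξ hξ => hasDerivAt_comp_curve (pd1 v) γ ξ _ _ (hγd ξ)
      (pdw_hasFDerivAt v (γ ξ) (1, 0) (hfdiff _ (hγU ξ hξ))).differentiableAt
  have D2 : ∀ ξ ∈ s, HasDerivAt (fun t => pd2 v (γ t))
      (pd1 (pd2 v) (γ ξ) * (-Real.sin (ϑ ξ)) + pd2 (pd2 v) (γ ξ) * Real.cos (ϑ ξ)) ξ :=
    fun ξ hξ => hasDerivAt_comp_curve (pd2 v) γ ξ _ _ (hγd ξ)
      (pdw_hasFDerivAt v (γ ξ) (0, 1) (hfdiff _ (hγU ξ hξ))).differentiableAt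
  have hud : ∀ ξ ∈ s, UniqueDiffWithinAt ℝ s ξ := fun ξ hξ => uniqueDiffOn_Icc hℓ ξ hξ
  constructor
  · -- forward direction
    intro H
    have key1 : ∀ ξ ∈ s, HasDerivAt (fun t => pd1 v (γ t)) 0 ξ := by
      intro ξ hξ
      have h := D1 ξ hξ
      have e : pd1 (pd1 v) (γ ξ) * (-Real.sin (ϑ ξ)) + pd2 (pd1 v) (γ ξ) * Real.cos (ϑ ξ)
          = 0 := by
        rw [h21 _ (hγU ξ hξ)]; exact (H ξ hξ).1
      rwa [e] at h
    have key2 : ∀ ξ ∈ s, HasDerivAt (fun t => pd2 v (γ t)) 0 ξ := by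
      intro ξ hξ
      have h := D2 ξ hξ
      have e : pd1 (pd2 v) (γ ξ) * (-Real.sin (ϑ ξ)) + pd2 (pd2 v) (γ ξ) * Real.cos (ϑ ξ)
          = 0 := by
        rw [← h21 _ (hγU ξ hξ)]; exact (H ξ hξ).2
      rwa [e] at h
    have hc1 : ∀ ξ ∈ s, pd1 v (γ ξ) = pd1 v (γ 0) := by
      apply constant_of_has_deriv_right_zero
      · exact fun ξ hξ => (key1 ξ hξ).continuousAt.continuousWithinAt
      · exact fun ξ hξ => (key1 ξ (Set.mem_Icc_of_Ico hξ)).hasDerivWithinAt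
    have hc2 : ∀ ξ ∈ s, pd2 v (γ ξ) = pd2 v (γ 0) := by
      apply constant_of_has_deriv_right_zero
      · exact fun ξ hξ => (key2 ξ hξ).continuousAt.continuousWithinAt
      · exact fun ξ hξ => (key2 ξ (Set.mem_Icc_of_Ico hξ)).hasDerivWithinAt
    set c₁ := pd1 v (γ 0) with hc₁
    set c₂ := pd2 v (γ 0) with hc₂
    refine ⟨v (γ 0) - c₁ * (γ 0).1 - c₂ * (γ 0).2, c₁, c₂, ?_⟩
    have hg : ∀ η ∈ s, HasDerivAt (fun t => v (γ t) - c₁ * (γ t).1 - c₂ * (γ t).2) 0 η := by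
      intro η hη
      have h := ((Dv η hη).sub ((hγ1 η).const_mul c₁)).sub ((hγ2 η).const_mul c₂)
      have e : pd1 v (γ η) * (-Real.sin (ϑ η)) + pd2 v (γ η) * Real.cos (ϑ η)
          - c₁ * -Real.sin (ϑ η) - c₂ * Real.cos (ϑ η) = 0 := by
        rw [hc1 η hη, hc2 η hη]; ring
      rwa [e] at h
    have hgc : ∀ η ∈ s, v (γ η) - c₁ * (γ η).1 - c₂ * (γ η).2
        = v (γ 0) - c₁ * (γ 0).1 - c₂ * (γ 0).2 := by
      apply constant_of_has_deriv_right_zero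
      · exact fun η hη => (hg η hη).continuousAt.continuousWithinAt
      · exact fun η hη => (hg η (Set.mem_Icc_of_Ico hη)).hasDerivWithinAt
    intro ξ hξ
    refine ⟨by linarith [hgc ξ hξ], ?_⟩
    rw [hc1 ξ hξ, hc2 ξ hξ]
  · -- reverse direction
    rintro ⟨c₀, c₁, c₂, H⟩
    have hA : ∀ ξ ∈ s, pd1 v (γ ξ) = c₁ ∧ pd2 v (γ ξ) = c₂ := by
      intro ξ hξ
      have h1 : HasDerivWithinAt (fun t => v (γ t))
          (pd1 v (γ ξ) * (-Real.sin (ϑ ξ)) + pd2 v (γ ξ) * Real.cos (ϑ ξ)) s ξ :=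
        (Dv ξ hξ).hasDerivWithinAt
      have haff : HasDerivAt (fun t => c₀ + c₁ * (γ t).1 + c₂ * (γ t).2)
          (c₁ * (-Real.sin (ϑ ξ)) + c₂ * Real.cos (ϑ ξ)) ξ := by
        have h := (((hγ1 ξ).const_mul c₁).const_add c₀).add ((hγ2 ξ).const_mul c₂)
        simp at h ⊢
        exact h
      have h2 : HasDerivWithinAt (fun t => v (γ t))
          (c₁ * (-Real.sin (ϑ ξ)) + c₂ * Real.cos (ϑ ξ)) s ξ :=
        haff.hasDerivWithinAt.congr (fun y hy => (H y hy).1) ((H ξ hξ).1)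
      have et := deriv_unique_within (hud ξ hξ) h1 h2
      have en := (H ξ hξ).2
      have hpy := Real.sin_sq_add_cos_sq (ϑ ξ)
      constructor
      · linear_combination (-Real.sin (ϑ ξ)) * et + Real.cos (ϑ ξ) * en
          - (pd1 v (γ ξ) - c₁) * hpy
      · linear_combination Real.cos (ϑ ξ) * et + Real.sin (ϑ ξ) * en
          - (pd2 v (γ ξ) - c₂) * hpy
    intro ξ hξ
    have k1 : pd1 (pd1 v) (γ ξ) * (-Real.sin (ϑ ξ)) + pd2 (pd1 v) (γ ξ) * Real.cos (ϑ ξ)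
        = 0 := by
      refine deriv_unique_within (hud ξ hξ) (D1 ξ hξ).hasDerivWithinAt ?_
      exact (hasDerivWithinAt_const ξ s c₁).congr (fun y hy => (hA y hy).1) ((hA ξ hξ).1)
    have k2 : pd1 (pd2 v) (γ ξ) * (-Real.sin (ϑ ξ)) + pd2 (pd2 v) (γ ξ) * Real.cos (ϑ ξ)
        = 0 := by
      refine deriv_unique_within (hud ξ hξ) (D2 ξ hξ).hasDerivWithinAt ?_
      exact (hasDerivWithinAt_const ξ s c₂).congr (fun y hy => (hA y hy).2) ((hA ξ hξ).2)
    constructor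
    · rw [← h21 _ (hγU ξ hξ)]; exact k1
    · rw [h21 _ (hγU ξ hξ)]; exact k2
end
end
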